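/- arXiv:2308.13470 — 5 statements merged into one kernel-verified Lean document; each statement's English description precedes it below -/
import Mathlib

section
/- The value function V of the two-good problem is nonpositive and nonincreasing on [0, ∞): V(h₀) ≤ 0 for all h₀ ≥ 0, and V(h₂) ≤ V(h₁) whenever 0 ≤ h₁ < h₂. -/
open MeasureTheory Real Set Filter

/-- State trajectory `h^{h₀,ℓ}(t) = e^{−φt} h₀ + φ ∫₀ᵗ e^{−φ(t−s)} ℓ(s) ds`. -/
noncomputable def traj (φ h₀ : ℝ) (ℓ : ℝ → ℝ) (t : ℝ) : ℝ :=
  Real.exp (-(φ * t)) * h₀ + φ * ∫ s in (0:ℝ)..t, Real.exp (-(φ * (t - s))) * ℓ s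

/-- Instantaneous utility of the two-good problem:
`U(ℓ, h) = ℓ^{1−σ} h^{γ(σ−1)} / (1−σ) + B̃ (1−ℓ)^{1−σ} / (1−σ)`, with `B̃ = B^{1−σ}`. -/
noncomputable def U2 (σ γ B ℓ h : ℝ) : ℝ :=
  ℓ ^ (1 - σ) * h ^ (γ * (σ - 1)) / (1 - σ) +
    B ^ (1 - σ) * (1 - ℓ) ^ (1 - σ) / (1 - σ)

/-- Admissible controls: measurable, with values in `[ℓ̲, ℓ̄]`. -/
def Admissible (lo hi : ℝ) (ℓ : ℝ → ℝ) : Prop :=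
  Measurable ℓ ∧ ∀ t, 0 ≤ t → ℓ t ∈ Set.Icc lo hi

/-- Value function of the two-good problem. -/
noncomputable def V (ρ φ σ γ B lo hi h₀ : ℝ) : ℝ :=
  sSup {x | ∃ ℓ : ℝ → ℝ, Admissible lo hi ℓ ∧
    x = ∫ t in Set.Ioi (0:ℝ), Real.exp (-(ρ * t)) * U2 σ γ B (ℓ t) (traj φ h₀ ℓ t)}

lemma U2_nonpos {σ γ B lo hi ℓ h : ℝ} (hσ : 1 < σ) (hB : 0 < B)
    (hlo : 0 < lo) (hhi : hi < 1) (hℓ : ℓ ∈ Set.Icc lo hi) (hh : 0 ≤ h) :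
    U2 σ γ B ℓ h ≤ 0 := by
  have hℓ0 : 0 < ℓ := lt_of_lt_of_le hlo hℓ.1
  have h1ℓ : 0 < 1 - ℓ := by linarith [hℓ.2]
  have hden : 1 - σ < 0 := by linarith
  have h1 : 0 ≤ ℓ ^ (1-σ) * h ^ (γ*(σ-1)) :=
    mul_nonneg (Real.rpow_nonneg hℓ0.le _) (Real.rpow_nonneg hh _)
  have h2 : 0 ≤ B ^ (1-σ) * (1-ℓ) ^ (1-σ) :=
    mul_nonneg (Real.rpow_nonneg hB.le _) (Real.rpow_nonneg h1ℓ.le _)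
  have d1 := div_nonpos_of_nonneg_of_nonpos h1 hden.le
  have d2 := div_nonpos_of_nonneg_of_nonpos h2 hden.le
  unfold U2; linarith

lemma U2_anti {σ γ B lo hi ℓ h₁ h₂ : ℝ} (hσ : 1 < σ) (hγσ : 0 ≤ γ*(σ-1))
    (hlo : 0 < lo) (hℓ : ℓ ∈ Set.Icc lo hi) (hh₁ : 0 ≤ h₁) (h12 : h₁ ≤ h₂) :
    U2 σ γ B ℓ h₂ ≤ U2 σ γ B ℓ h₁ := by
  have hℓ0 : 0 < ℓ := lt_of_lt_of_le hlo hℓ.1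
  have hden : 1 - σ < 0 := by linarith
  have hinv : (1 - σ)⁻¹ ≤ 0 := inv_nonpos.2 hden.le
  have hr : h₁ ^ (γ*(σ-1)) ≤ h₂ ^ (γ*(σ-1)) := Real.rpow_le_rpow hh₁ h12 hγσ
  have hmul : ℓ ^ (1-σ) * (h₁ ^ (γ*(σ-1))) ≤ ℓ ^ (1-σ) * (h₂ ^ (γ*(σ-1))) :=
    mul_le_mul_of_nonneg_left hr (Real.rpow_nonneg hℓ0.le _)
  have := mul_le_mul_of_nonpos_right hmul hinv
  unfold U2
  rw [div_eq_mul_inv, div_eq_mul_inv, div_eq_mul_inv]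
  linarith

lemma abs_U2_le {σ γ B lo hi ℓ h M : ℝ} (hσ : 1 < σ) (hγσ : 0 ≤ γ*(σ-1)) (hB : 0 < B)
    (hlo : 0 < lo) (hhi : hi < 1) (hℓ : ℓ ∈ Set.Icc lo hi) (hh : 0 ≤ h) (hhM : h ≤ M) :
    |U2 σ γ B ℓ h| ≤ (lo ^ (1-σ) * M ^ (γ*(σ-1)) + B ^ (1-σ) * (1-hi) ^ (1-σ)) / (σ-1) := by
  have h0 : U2 σ γ B ℓ h ≤ 0 := U2_nonpos hσ hB hlo hhi hℓ hh
  rw [abs_of_nonpos h0]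
  have hℓ0 : 0 < ℓ := lt_of_lt_of_le hlo hℓ.1
  have h1hi : 0 < 1 - hi := by linarith
  have hσ1 : (0:ℝ) < σ - 1 := by linarith
  have e1 : ℓ ^ (1-σ) ≤ lo ^ (1-σ) := Real.rpow_le_rpow_of_nonpos hlo hℓ.1 (by linarith)
  have e2 : h ^ (γ*(σ-1)) ≤ M ^ (γ*(σ-1)) := Real.rpow_le_rpow hh hhM hγσ
  have e3 : (1-ℓ) ^ (1-σ) ≤ (1-hi) ^ (1-σ) :=
    Real.rpow_le_rpow_of_nonpos h1hi (by linarith [hℓ.2]) (by linarith)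
  have hA : ℓ ^ (1-σ) * h ^ (γ*(σ-1)) ≤ lo ^ (1-σ) * M ^ (γ*(σ-1)) :=
    mul_le_mul e1 e2 (Real.rpow_nonneg hh _) (Real.rpow_nonneg hlo.le _)
  have hBt : B ^ (1-σ) * (1-ℓ) ^ (1-σ) ≤ B ^ (1-σ) * (1-hi) ^ (1-σ) :=
    mul_le_mul_of_nonneg_left e3 (Real.rpow_nonneg hB.le _)
  have hsum : ℓ ^ (1-σ) * h ^ (γ*(σ-1)) + B ^ (1-σ) * (1-ℓ) ^ (1-σ)
      ≤ lo ^ (1-σ) * M ^ (γ*(σ-1)) + B ^ (1-σ) * (1-hi) ^ (1-σ) := by linarith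
  have hneg : -U2 σ γ B ℓ h
      = (ℓ ^ (1-σ) * h ^ (γ*(σ-1)) + B ^ (1-σ) * (1-ℓ) ^ (1-σ)) / (σ-1) := by
    have key : ∀ x : ℝ, -(x/(1-σ)) = x/(σ-1) := fun x => by
      rw [show (1-σ:ℝ) = -(σ-1) by ring, div_neg, neg_neg]
    unfold U2
    rw [neg_add, key, key, ← add_div]
  rw [hneg]
  gcongr

lemma traj_congr {φ h₀ : ℝ} {ℓ ℓ' : ℝ → ℝ} {t : ℝ} (ht : 0 ≤ t)
    (h : ∀ s, 0 ≤ s → ℓ s = ℓ' s) : traj φ h₀ ℓ t = traj φ h₀ ℓ' t := by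
  unfold traj
  congr 2
  apply intervalIntegral.integral_congr
  intro s hs
  rw [Set.uIcc_of_le ht] at hs
  show Real.exp (-(φ*(t-s))) * ℓ s = Real.exp (-(φ*(t-s))) * ℓ' s
  rw [h s hs.1]

lemma traj_nonneg {φ h₀ : ℝ} {ℓ : ℝ → ℝ} {t : ℝ} (hφ : 0 < φ) (hh₀ : 0 ≤ h₀)
    (ht : 0 ≤ t) (hℓ : ∀ s ∈ Set.Icc 0 t, 0 ≤ ℓ s) : 0 ≤ traj φ h₀ ℓ t := by
  have h1 : 0 ≤ ∫ s in (0:ℝ)..t, Real.exp (-(φ*(t-s))) * ℓ s :=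
    intervalIntegral.integral_nonneg ht (fun u hu => mul_nonneg (Real.exp_nonneg _) (hℓ u hu))
  unfold traj
  have := mul_nonneg (Real.exp_nonneg (-(φ*t))) hh₀
  nlinarith

lemma traj_primitive (φ h₀ : ℝ) (ℓ : ℝ → ℝ) (t : ℝ) :
    traj φ h₀ ℓ t = Real.exp (-(φ*t)) * h₀ +
      φ * (Real.exp (-(φ*t)) * ∫ s in (0:ℝ)..t, Real.exp (φ*s) * ℓ s) := by
  unfold traj
  congr 2
  rw [← intervalIntegral.integral_const_mul]
  apply intervalIntegral.integral_congr
  intro s _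
  show Real.exp (-(φ*(t-s))) * ℓ s = Real.exp (-(φ*t)) * (Real.exp (φ*s) * ℓ s)
  rw [show -(φ*(t-s)) = -(φ*t) + φ*s by ring, Real.exp_add, mul_assoc]

lemma traj_le {φ lo hi h₀ : ℝ} {ℓ : ℝ → ℝ} {t : ℝ} (hφ : 0 < φ) (hh₀ : 0 ≤ h₀)
    (ht : 0 ≤ t) (hmeas : Measurable ℓ) (hlo : 0 < lo) (hhi : hi ≤ 1)
    (hℓ : ∀ s, ℓ s ∈ Set.Icc lo hi) :
    traj φ h₀ ℓ t ≤ h₀ + 1 := by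
  have hd0 : ∀ s, 0 ≤ ℓ s := fun s => hlo.le.trans (hℓ s).1
  have hint1 : IntervalIntegrable (fun s => Real.exp (-(φ*(t-s))) * ℓ s) volume 0 t := by
    rw [intervalIntegrable_iff, Set.uIoc_of_le ht]
    apply MeasureTheory.Integrable.mono' (g := fun _ => hi)
    · exact (integrableOn_const_iff).2 (Or.inr measure_Ioc_lt_top)
    · exact (((measurable_const.sub measurable_id).const_mul φ).neg.exp.mul hmeas).aestronglyMeasurable
    · refine (ae_restrict_iff' measurableSet_Ioc).2 (Filter.Eventually.of_forall fun s hs => ?_)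
      rw [Real.norm_eq_abs, abs_of_nonneg (mul_nonneg (Real.exp_nonneg _) (hd0 s))]
      calc Real.exp (-(φ*(t-s))) * ℓ s ≤ 1 * hi := by
            apply mul_le_mul _ (hℓ s).2 (hd0 s) zero_le_one
            exact Real.exp_le_one_iff.2 (by nlinarith [hs.2])
        _ = hi := one_mul hi
  have hint2 : IntervalIntegrable (fun s => Real.exp (-(φ*(t-s)))) volume 0 t :=
    (by fun_prop : Continuous fun s => Real.exp (-(φ*(t-s)))).intervalIntegrable 0 t
  have hmono : (∫ s in (0:ℝ)..t, Real.exp (-(φ*(t-s))) * ℓ s)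
      ≤ ∫ s in (0:ℝ)..t, Real.exp (-(φ*(t-s))) := by
    apply intervalIntegral.integral_mono_on ht hint1 hint2
    intro s hs
    exact mul_le_of_le_one_right (Real.exp_nonneg _) ((hℓ s).2.trans hhi)
  have hcomp : (∫ s in (0:ℝ)..t, Real.exp (-(φ*(t-s)))) = 1/φ - Real.exp (-(φ*t))/φ := by
    have hd : ∀ s ∈ Set.uIcc (0:ℝ) t,
        HasDerivAt (fun s => Real.exp (-(φ*(t-s)))/φ) (Real.exp (-(φ*(t-s)))) s := by
      intro s _
      have h1 : HasDerivAt (fun s : ℝ => -(φ*(t-s))) φ s := by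
        have : (fun s : ℝ => -(φ*(t-s))) = fun s => φ*s - φ*t := by funext s; ring
        rw [this]
        simpa using ((hasDerivAt_id s).const_mul φ).sub_const (φ*t)
      have h2 := (h1.exp).div_const φ
      simpa [mul_div_assoc, mul_div_cancel_right₀, hφ.ne'] using h2
    rw [intervalIntegral.integral_eq_sub_of_hasDerivAt hd hint2]
    simp [mul_comm]
  have hI : φ * (∫ s in (0:ℝ)..t, Real.exp (-(φ*(t-s))) * ℓ s) ≤ 1 := by
    have h2 : (∫ s in (0:ℝ)..t, Real.exp (-(φ*(t-s))) * ℓ s) ≤ 1/φ - Real.exp (-(φ*t))/φ :=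
      hmono.trans_eq hcomp
    have h3 := mul_le_mul_of_nonneg_left h2 hφ.le
    have h4 : φ * (1/φ - Real.exp (-(φ*t))/φ) = 1 - Real.exp (-(φ*t)) := by
      field_simp
    nlinarith [Real.exp_nonneg (-(φ*t))]
  have hE : Real.exp (-(φ*t)) * h₀ ≤ h₀ :=
    mul_le_of_le_one_left hh₀ (Real.exp_le_one_iff.2 (by nlinarith))
  unfold traj
  linarith

lemma payoff_integrable {ρ φ σ γ B lo hi h₀ : ℝ} (hρ : 0 < ρ) (hφ : 0 < φ) (hσ : 1 < σ)
    (hγσ : 0 ≤ γ * (σ - 1)) (hB : 0 < B) (hlo : 0 < lo) (hlohi : lo ≤ hi) (hhi : hi < 1)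
    (hh₀ : 0 ≤ h₀) (ℓ : ℝ → ℝ) (hℓ : Admissible lo hi ℓ) :
    MeasureTheory.IntegrableOn
      (fun t => Real.exp (-(ρ*t)) * U2 σ γ B (ℓ t) (traj φ h₀ ℓ t)) (Set.Ioi 0) := by
  obtain ⟨hm, hv⟩ := hℓ
  set ℓ' : ℝ → ℝ := fun s => if 0 ≤ s then ℓ s else lo with hℓ'def
  have hm' : Measurable ℓ' := Measurable.ite measurableSet_Ici hm measurable_const
  have hv' : ∀ s, ℓ' s ∈ Set.Icc lo hi := by
    intro s; by_cases h : 0 ≤ s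
    · simp only [hℓ'def, if_pos h]; exact hv s h
    · simp only [hℓ'def, if_neg h]; exact ⟨le_rfl, hlohi⟩
  have heq : ∀ t, 0 ≤ t → traj φ h₀ ℓ t = traj φ h₀ ℓ' t := fun t ht =>
    traj_congr ht (fun s hs => by simp only [hℓ'def, if_pos hs])
  -- interval integrability of the primitive integrand
  have hg : ∀ a b : ℝ, IntervalIntegrable (fun s => Real.exp (φ*s) * ℓ' s) volume a b := by
    intro a b
    rw [intervalIntegrable_iff]
    apply MeasureTheory.Integrable.mono' (g := fun _ => Real.exp (φ * (|a| + |b|)) * hi)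
    · exact (integrableOn_const_iff).2 (Or.inr (by rw [Set.uIoc]; exact measure_Ioc_lt_top))
    · exact ((measurable_id.const_mul φ).exp.mul hm').aestronglyMeasurable
    · refine (ae_restrict_iff' measurableSet_uIoc).2 (Filter.Eventually.of_forall fun s hs => ?_)
      have hs2 : s ≤ |a| + |b| := by
        have : s ≤ a ⊔ b := hs.2
        have ha : a ≤ |a| := le_abs_self a
        have hb : b ≤ |b| := le_abs_self b
        have := max_le (ha.trans (le_add_of_nonneg_right (abs_nonneg b)))
          (hb.trans (le_add_of_nonneg_left (abs_nonneg a)))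
        linarith [this, hs.2.trans this]
      have h0 : 0 ≤ ℓ' s := hlo.le.trans (hv' s).1
      rw [Real.norm_eq_abs, abs_of_nonneg (mul_nonneg (Real.exp_nonneg _) h0)]
      exact mul_le_mul (Real.exp_le_exp.2 (mul_le_mul_of_nonneg_left hs2 hφ.le))
        (hv' s).2 h0 (Real.exp_nonneg _)
  set F : ℝ → ℝ := fun t => ∫ s in (0:ℝ)..t, Real.exp (φ*s) * ℓ' s with hFdef
  have hFc : Continuous F := intervalIntegral.continuous_primitive hg 0
  set H : ℝ → ℝ := fun t => Real.exp (-(φ*t)) * h₀ + φ * (Real.exp (-(φ*t)) * F t) with hHdef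
  have hHc : Continuous H := by fun_prop
  -- measurable version of the integrand
  set G : ℝ → ℝ := fun t => Real.exp (-(ρ*t)) *
      (Real.exp (Real.log (ℓ' t) * (1-σ)) * (H t) ^ (γ*(σ-1)) / (1-σ) +
        B ^ (1-σ) * Real.exp (Real.log (1 - ℓ' t) * (1-σ)) / (1-σ)) with hGdef
  have hGm : Measurable G := by
    apply Measurable.mul
    · exact ((measurable_id.const_mul ρ).neg).exp
    · apply Measurable.add
      · apply Measurable.div_const
        apply Measurable.mul
        · exact ((Real.measurable_log.comp hm').mul measurable_const).exp
        · exact (Real.continuous_rpow_const hγσ).measurable.comp hHc.measurable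
      · apply Measurable.div_const
        exact measurable_const.mul
          ((Real.measurable_log.comp (measurable_const.sub hm')).mul measurable_const).exp
  have heqG : ∀ t ∈ Set.Ioi (0:ℝ),
      Real.exp (-(ρ*t)) * U2 σ γ B (ℓ t) (traj φ h₀ ℓ t) = G t := by
    intro t ht
    have ht' : (0:ℝ) ≤ t := (le_of_lt ht)
    have hℓt : ℓ t = ℓ' t := by simp only [hℓ'def, if_pos ht']
    have hpos : 0 < ℓ' t := hlo.trans_le (hv' t).1
    have hpos2 : 0 < 1 - ℓ' t := by linarith [(hv' t).2]
    have htr : traj φ h₀ ℓ t = H t := by rw [heq t ht', traj_primitive]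
    rw [hGdef]
    simp only []
    rw [hℓt, htr]
    unfold U2
    rw [Real.rpow_def_of_pos hpos, Real.rpow_def_of_pos hpos2]
  -- bound
  set C : ℝ := (lo ^ (1-σ) * (h₀+1) ^ (γ*(σ-1)) + B ^ (1-σ) * (1-hi) ^ (1-σ)) / (σ-1) with hCdef
  apply MeasureTheory.Integrable.mono' (g := fun t => C * Real.exp (-(ρ*t)))
  · have := (exp_neg_integrableOn_Ioi 0 hρ).const_mul C
    simpa [neg_mul] using this
  · exact (hGm.aestronglyMeasurable.restrict).congr
      ((ae_restrict_iff' measurableSet_Ioi).2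
        (Filter.Eventually.of_forall fun t ht => (heqG t ht).symm))
  · refine (ae_restrict_iff' measurableSet_Ioi).2 (Filter.Eventually.of_forall fun t ht => ?_)
    have ht' : (0:ℝ) ≤ t := le_of_lt ht
    have htr0 : 0 ≤ traj φ h₀ ℓ t := by
      rw [heq t ht']
      exact traj_nonneg hφ hh₀ ht' (fun s _ => hlo.le.trans (hv' s).1)
    have htrM : traj φ h₀ ℓ t ≤ h₀ + 1 := by
      rw [heq t ht']
      exact traj_le hφ hh₀ ht' hm' hlo hhi.le hv'
    have hU := abs_U2_le hσ hγσ hB hlo hhi (hv t ht') htr0 htrM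
    rw [Real.norm_eq_abs, abs_mul, abs_of_nonneg (Real.exp_nonneg _)]
    calc Real.exp (-(ρ*t)) * |U2 σ γ B (ℓ t) (traj φ h₀ ℓ t)|
        ≤ Real.exp (-(ρ*t)) * C := mul_le_mul_of_nonneg_left hU (Real.exp_nonneg _)
      _ = C * Real.exp (-(ρ*t)) := mul_comm _ _

/-- the value function `V` of the two-good problem is nonpositive and
nonincreasing on `[0, ∞)`. -/
theorem V_nonpos_antitone (ρ φ σ γ B lo hi : ℝ)
    (hρ : 0 < ρ) (hφ : 0 < φ) (hσ : 1 < σ) (hγ0 : 0 < γ) (hγ1 : γ < 1)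
    (hγσ : 1 < γ * (σ - 1)) (hB : 0 < B) (hlo : 0 < lo) (hlohi : lo ≤ hi) (hhi : hi < 1) :
    (∀ h₀, 0 ≤ h₀ → V ρ φ σ γ B lo hi h₀ ≤ 0) ∧
      (∀ h₁ h₂, 0 ≤ h₁ → h₁ < h₂ → V ρ φ σ γ B lo hi h₂ ≤ V ρ φ σ γ B lo hi h₁) := by
  have hγσ0 : 0 ≤ γ * (σ - 1) := hγσ.le.trans' zero_le_one
  have upper : ∀ h₀ : ℝ, 0 ≤ h₀ → ∀ x ∈ {x | ∃ ℓ : ℝ → ℝ, Admissible lo hi ℓ ∧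
      x = ∫ t in Set.Ioi (0:ℝ), Real.exp (-(ρ * t)) * U2 σ γ B (ℓ t) (traj φ h₀ ℓ t)},
      x ≤ (0:ℝ) := by
    rintro h₀ hh₀ x ⟨ℓ, hℓ, rfl⟩
    apply MeasureTheory.integral_nonpos_of_ae
    refine (ae_restrict_iff' measurableSet_Ioi).2 (Filter.Eventually.of_forall fun t ht => ?_)
    have ht' : (0:ℝ) ≤ t := le_of_lt ht
    have htr : 0 ≤ traj φ h₀ ℓ t :=
      traj_nonneg hφ hh₀ ht' (fun s hs => hlo.le.trans (hℓ.2 s hs.1).1)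
    have hU : U2 σ γ B (ℓ t) (traj φ h₀ ℓ t) ≤ 0 :=
      U2_nonpos hσ hB hlo hhi (hℓ.2 t ht') htr
    have := mul_le_mul_of_nonneg_left hU (Real.exp_nonneg (-(ρ*t)))
    simpa using this
  constructor
  · intro h₀ hh₀
    exact Real.sSup_le (upper h₀ hh₀) le_rfl
  · intro h₁ h₂ hh₁ h12
    have hh₂ : 0 ≤ h₂ := hh₁.trans h12.le
    unfold V
    apply csSup_le
    · exact ⟨_, ⟨fun _ => lo, ⟨measurable_const, fun t _ => ⟨le_rfl, hlohi⟩⟩, rfl⟩⟩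
    · rintro x ⟨ℓ, hℓ, rfl⟩
      have hint₂ := payoff_integrable hρ hφ hσ hγσ0 hB hlo hlohi hhi hh₂ ℓ hℓ
      have hint₁ := payoff_integrable hρ hφ hσ hγσ0 hB hlo hlohi hhi hh₁ ℓ hℓ
      have hmono : (∫ t in Set.Ioi (0:ℝ), Real.exp (-(ρ * t)) * U2 σ γ B (ℓ t) (traj φ h₂ ℓ t))
          ≤ ∫ t in Set.Ioi (0:ℝ), Real.exp (-(ρ * t)) * U2 σ γ B (ℓ t) (traj φ h₁ ℓ t) := by
        apply MeasureTheory.integral_mono_ae hint₂ hint₁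
        refine (ae_restrict_iff' measurableSet_Ioi).2 (Filter.Eventually.of_forall fun t ht => ?_)
        have ht' : (0:ℝ) ≤ t := le_of_lt ht
        have htr1 : 0 ≤ traj φ h₁ ℓ t :=
          traj_nonneg hφ hh₁ ht' (fun s hs => hlo.le.trans (hℓ.2 s hs.1).1)
        have htr12 : traj φ h₁ ℓ t ≤ traj φ h₂ ℓ t := by
          unfold traj
          have := mul_le_mul_of_nonneg_left h12.le (Real.exp_nonneg (-(φ*t)))
          linarith
        exact mul_le_mul_of_nonneg_left
          (U2_anti hσ hγσ0 hlo (hℓ.2 t ht') htr1 htr12) (Real.exp_nonneg _)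
      refine hmono.trans (le_csSup ⟨0, fun y hy => upper h₁ hh₁ y hy⟩ ⟨ℓ, hℓ, rfl⟩)
end

section
/- The value function V of the two-good problem is finite at 0: V(0) > −∞. More precisely, V(0) ≥ ∫₀^∞ e^{−ρt} [ (ℓ̲^{1−σ}/(1−σ)) · (ℓ̲(1 − e^{−φt}))^{γ(σ−1)} + B̃ (1−ℓ̄)^{1−σ}/(1−σ) ] dt, and this integral is finite. -/
open MeasureTheory Real Set Filter

lemma interval_exp_aux (φ t : ℝ) (hφ : 0 < φ) :
    ∫ s in (0:ℝ)..t, Real.exp (-(φ * (t - s))) = (1 - Real.exp (-(φ * t))) / φ := by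
  have hderiv : ∀ s ∈ Set.uIcc (0:ℝ) t,
      HasDerivAt (fun u => Real.exp (-(φ * (t - u))) / φ) (Real.exp (-(φ * (t - s)))) s := by
    intro s _
    have h1 : HasDerivAt (fun u : ℝ => -(φ * (t - u))) φ s := by
      have := (((hasDerivAt_id s).const_sub t).const_mul φ).neg
      simpa [Pi.neg_def] using this
    have h2 := (h1.exp).div_const φ
    simpa [mul_div_assoc, div_self (ne_of_gt hφ)] using h2
  have hint : IntervalIntegrable (fun s => Real.exp (-(φ * (t - s)))) volume 0 t :=
    (Continuous.intervalIntegrable (by continuity) 0 t)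
  have := intervalIntegral.integral_eq_sub_of_hasDerivAt hderiv hint
  rw [this]
  simp
  ring

lemma traj_const (φ c t : ℝ) (hφ : 0 < φ) :
    traj φ 0 (fun _ => c) t = c * (1 - Real.exp (-(φ * t))) := by
  unfold traj
  rw [intervalIntegral.integral_mul_const, interval_exp_aux φ t hφ]
  field_simp
  ring

lemma aux_integrable (ρ : ℝ) (hρ : 0 < ρ) (f : ℝ → ℝ) (hf : Continuous f) (M : ℝ)
    (hM : ∀ t ∈ Set.Ioi (0:ℝ), |f t| ≤ M) :
    IntegrableOn (fun t => Real.exp (-(ρ * t)) * f t) (Set.Ioi (0:ℝ)) := by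
  have hM0 : 0 ≤ M := le_trans (abs_nonneg _) (hM 1 (by norm_num))
  have hg : IntegrableOn (fun t => M * Real.exp (-ρ * t)) (Set.Ioi (0:ℝ)) :=
    (exp_neg_integrableOn_Ioi 0 hρ).const_mul M
  refine Integrable.mono hg ?_ ?_
  · exact ((Real.continuous_exp.comp (by continuity)).mul hf).aestronglyMeasurable
  · filter_upwards [ae_restrict_mem measurableSet_Ioi] with t ht
    have h1 : |Real.exp (-(ρ * t)) * f t| ≤ M * Real.exp (-ρ * t) := by
      rw [abs_mul, abs_of_nonneg (Real.exp_pos _).le]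
      have := hM t ht
      have he : Real.exp (-(ρ * t)) = Real.exp (-ρ * t) := by ring_nf
      rw [he, mul_comm]
      exact mul_le_mul_of_nonneg_right this (Real.exp_pos _).le
    calc ‖Real.exp (-(ρ * t)) * f t‖ = |Real.exp (-(ρ * t)) * f t| := rfl
      _ ≤ M * Real.exp (-ρ * t) := h1
      _ ≤ ‖M * Real.exp (-ρ * t)‖ := le_abs_self _

/-- `V(0) > −∞`; more precisely `V(0)` is bounded below by the (finite)
payoff integral of the constant control `ℓ̲` started at `h₀ = 0`. -/
theorem V_finite_at_zero (ρ φ σ γ B lo hi : ℝ)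
    (hρ : 0 < ρ) (hφ : 0 < φ) (hσ : 1 < σ) (hγ0 : 0 < γ) (hγ1 : γ < 1)
    (hγσ : 1 < γ * (σ - 1)) (hB : 0 < B) (hlo : 0 < lo) (hlohi : lo ≤ hi) (hhi : hi < 1) :
    IntegrableOn
      (fun t => Real.exp (-(ρ * t)) *
        (lo ^ (1 - σ) / (1 - σ) * (lo * (1 - Real.exp (-(φ * t)))) ^ (γ * (σ - 1)) +
          B ^ (1 - σ) * (1 - hi) ^ (1 - σ) / (1 - σ)))
      (Set.Ioi (0:ℝ)) ∧
    (∫ t in Set.Ioi (0:ℝ), Real.exp (-(ρ * t)) *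
        (lo ^ (1 - σ) / (1 - σ) * (lo * (1 - Real.exp (-(φ * t)))) ^ (γ * (σ - 1)) +
          B ^ (1 - σ) * (1 - hi) ^ (1 - σ) / (1 - σ)))
      ≤ V ρ φ σ γ B lo hi 0 := by
  set p : ℝ := γ * (σ - 1) with hp
  have hp0 : 0 < p := lt_trans one_pos hγσ
  have hσ1 : 1 - σ < 0 := by linarith
  -- generic bound for functions of the given shape
  have key : ∀ C : ℝ, ∀ t ∈ Set.Ioi (0:ℝ),
      |lo ^ (1 - σ) / (1 - σ) * (lo * (1 - Real.exp (-(φ * t)))) ^ p + C|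
        ≤ |lo ^ (1 - σ) / (1 - σ)| * lo ^ p + |C| := by
    intro C t ht
    have hexp : Real.exp (-(φ * t)) < 1 := by
      rw [Real.exp_lt_one_iff]
      have : 0 < φ * t := mul_pos hφ ht
      linarith
    have hexp0 : 0 < Real.exp (-(φ * t)) := Real.exp_pos _
    have hb0 : 0 ≤ lo * (1 - Real.exp (-(φ * t))) := by nlinarith
    have hb1 : lo * (1 - Real.exp (-(φ * t))) ≤ lo := by nlinarith
    have hrle : (lo * (1 - Real.exp (-(φ * t)))) ^ p ≤ lo ^ p :=
      Real.rpow_le_rpow hb0 hb1 hp0.le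
    have hr0 : 0 ≤ (lo * (1 - Real.exp (-(φ * t)))) ^ p := Real.rpow_nonneg hb0 p
    have hA : lo ^ (1 - σ) / (1 - σ) < 0 :=
      div_neg_of_pos_of_neg (Real.rpow_pos_of_pos hlo _) hσ1
    calc |lo ^ (1 - σ) / (1 - σ) * (lo * (1 - Real.exp (-(φ * t)))) ^ p + C|
        ≤ |lo ^ (1 - σ) / (1 - σ) * (lo * (1 - Real.exp (-(φ * t)))) ^ p| + |C| := abs_add_le _ _
      _ ≤ |lo ^ (1 - σ) / (1 - σ)| * lo ^ p + |C| := by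
          rw [abs_mul]
          have : |(lo * (1 - Real.exp (-(φ * t)))) ^ p| ≤ lo ^ p := by
            rw [abs_of_nonneg hr0]; exact hrle
          have h0 : 0 ≤ |lo ^ (1 - σ) / (1 - σ)| := abs_nonneg _
          nlinarith
  have contf : ∀ C : ℝ, Continuous
      (fun t => lo ^ (1 - σ) / (1 - σ) * (lo * (1 - Real.exp (-(φ * t)))) ^ p + C) := by
    intro C
    apply Continuous.add _ continuous_const
    apply Continuous.mul continuous_const
    apply Continuous.rpow_const (by continuity)
    intro x; exact Or.inr hp0.le
  -- integrability of both comparison functions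
  have int1 : IntegrableOn
      (fun t => Real.exp (-(ρ * t)) *
        (lo ^ (1 - σ) / (1 - σ) * (lo * (1 - Real.exp (-(φ * t)))) ^ p +
          B ^ (1 - σ) * (1 - hi) ^ (1 - σ) / (1 - σ))) (Set.Ioi (0:ℝ)) :=
    aux_integrable ρ hρ _ (contf _) _ (key _)
  have int2 : IntegrableOn
      (fun t => Real.exp (-(ρ * t)) *
        (lo ^ (1 - σ) / (1 - σ) * (lo * (1 - Real.exp (-(φ * t)))) ^ p +
          B ^ (1 - σ) * (1 - lo) ^ (1 - σ) / (1 - σ))) (Set.Ioi (0:ℝ)) :=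
    aux_integrable ρ hρ _ (contf _) _ (key _)
  refine ⟨int1, ?_⟩
  -- V is the sSup of a set S; the payoff of the constant control lo is in S
  set S := {x | ∃ ℓ : ℝ → ℝ, Admissible lo hi ℓ ∧
    x = ∫ t in Set.Ioi (0:ℝ), Real.exp (-(ρ * t)) * U2 σ γ B (ℓ t) (traj φ 0 ℓ t)} with hS
  have hmem : (∫ t in Set.Ioi (0:ℝ), Real.exp (-(ρ * t)) *
      U2 σ γ B ((fun _ => lo) t) (traj φ 0 (fun _ => lo) t)) ∈ S := by
    exact ⟨fun _ => lo, ⟨measurable_const, fun t _ => ⟨le_refl lo, hlohi⟩⟩, rfl⟩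
  have hbdd : BddAbove S := by
    refine ⟨0, fun x hx => ?_⟩
    obtain ⟨ℓ, ⟨hmeas, hbox⟩, rfl⟩ := hx
    apply setIntegral_nonpos measurableSet_Ioi
    intro t ht
    have ht0 : (0:ℝ) ≤ t := le_of_lt ht
    obtain ⟨hℓlo, hℓhi⟩ := hbox t ht0
    have hℓpos : 0 < ℓ t := lt_of_lt_of_le hlo hℓlo
    have hℓ1 : ℓ t < 1 := lt_of_le_of_lt hℓhi hhi
    have htraj : 0 ≤ traj φ 0 ℓ t := by
      unfold traj
      have hI : 0 ≤ ∫ s in (0:ℝ)..t, Real.exp (-(φ * (t - s))) * ℓ s := by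
        apply intervalIntegral.integral_nonneg ht0
        intro u hu
        exact mul_nonneg (Real.exp_pos _).le
          (le_trans hlo.le (hbox u hu.1).1)
      have := mul_nonneg hφ.le hI
      simp only [mul_zero]
      linarith
    have hU : U2 σ γ B (ℓ t) (traj φ 0 ℓ t) ≤ 0 := by
      unfold U2
      have h1 : (ℓ t) ^ (1 - σ) * (traj φ 0 ℓ t) ^ (γ * (σ - 1)) / (1 - σ) ≤ 0 :=
        div_nonpos_of_nonneg_of_nonpos
          (mul_nonneg (Real.rpow_pos_of_pos hℓpos _).le (Real.rpow_nonneg htraj _)) hσ1.le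
      have h2 : B ^ (1 - σ) * (1 - ℓ t) ^ (1 - σ) / (1 - σ) ≤ 0 :=
        div_nonpos_of_nonneg_of_nonpos
          (mul_nonneg (Real.rpow_pos_of_pos hB _).le
            (Real.rpow_pos_of_pos (by linarith) _).le) hσ1.le
      linarith
    exact mul_nonpos_of_nonneg_of_nonpos (Real.exp_pos _).le hU
  have hVle : (∫ t in Set.Ioi (0:ℝ), Real.exp (-(ρ * t)) *
      U2 σ γ B ((fun _ => lo) t) (traj φ 0 (fun _ => lo) t)) ≤ V ρ φ σ γ B lo hi 0 :=
    le_csSup hbdd hmem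
  -- the payoff of the constant control equals the explicit integral with (1 - lo)
  have heq : (∫ t in Set.Ioi (0:ℝ), Real.exp (-(ρ * t)) *
      U2 σ γ B ((fun _ => lo) t) (traj φ 0 (fun _ => lo) t))
      = ∫ t in Set.Ioi (0:ℝ), Real.exp (-(ρ * t)) *
        (lo ^ (1 - σ) / (1 - σ) * (lo * (1 - Real.exp (-(φ * t)))) ^ p +
          B ^ (1 - σ) * (1 - lo) ^ (1 - σ) / (1 - σ)) := by
    congr 1
    funext t
    rw [traj_const φ lo t hφ]
    unfold U2
    ring
  -- pointwise comparison of the two explicit integrands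
  have hmono : (∫ t in Set.Ioi (0:ℝ), Real.exp (-(ρ * t)) *
        (lo ^ (1 - σ) / (1 - σ) * (lo * (1 - Real.exp (-(φ * t)))) ^ p +
          B ^ (1 - σ) * (1 - hi) ^ (1 - σ) / (1 - σ)))
      ≤ ∫ t in Set.Ioi (0:ℝ), Real.exp (-(ρ * t)) *
        (lo ^ (1 - σ) / (1 - σ) * (lo * (1 - Real.exp (-(φ * t)))) ^ p +
          B ^ (1 - σ) * (1 - lo) ^ (1 - σ) / (1 - σ)) := by
    apply setIntegral_mono_on int1 int2 measurableSet_Ioi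
    intro t _
    have hbase : (1 - hi) ≤ (1 - lo) := by linarith
    have hrpow : (1 - lo) ^ (1 - σ) ≤ (1 - hi) ^ (1 - σ) :=
      Real.rpow_le_rpow_of_nonpos (by linarith) hbase hσ1.le
    have hBpos : 0 < B ^ (1 - σ) := Real.rpow_pos_of_pos hB _
    have hkey : B ^ (1 - σ) * (1 - hi) ^ (1 - σ) / (1 - σ)
        ≤ B ^ (1 - σ) * (1 - lo) ^ (1 - σ) / (1 - σ) := by
      rw [div_eq_mul_inv, div_eq_mul_inv]
      exact mul_le_mul_of_nonpos_right
        (mul_le_mul_of_nonneg_left hrpow hBpos.le) (inv_nonpos.mpr hσ1.le)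
    have := mul_le_mul_of_nonneg_left (by linarith :
      lo ^ (1 - σ) / (1 - σ) * (lo * (1 - Real.exp (-(φ * t)))) ^ p +
          B ^ (1 - σ) * (1 - hi) ^ (1 - σ) / (1 - σ)
        ≤ lo ^ (1 - σ) / (1 - σ) * (lo * (1 - Real.exp (-(φ * t)))) ^ p +
          B ^ (1 - σ) * (1 - lo) ^ (1 - σ) / (1 - σ)) (Real.exp_pos (-(ρ * t))).le
    exact this
  calc (∫ t in Set.Ioi (0:ℝ), Real.exp (-(ρ * t)) *
        (lo ^ (1 - σ) / (1 - σ) * (lo * (1 - Real.exp (-(φ * t)))) ^ p +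
          B ^ (1 - σ) * (1 - hi) ^ (1 - σ) / (1 - σ)))
      ≤ _ := hmono
    _ = _ := heq.symm
    _ ≤ V ρ φ σ γ B lo hi 0 := hVle
end

section
/- The value function V of the two-good problem tends to −∞ at infinity: V(h₀) → −∞ as h₀ → +∞. -/
open MeasureTheory Real Set Filter

set_option linter.unusedVariables false

-- interval integrability of the kernel against a bounded measurable control
lemma II_aux {φ lo hi : ℝ} (hφ : 0 < φ) (hlo : 0 < lo) {ℓ : ℝ → ℝ}
    (hm : Measurable ℓ) (hb : ∀ s, ℓ s ∈ Set.Icc lo hi) (t : ℝ) :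
    IntervalIntegrable (fun s => Real.exp (-(φ * (t - s))) * ℓ s) volume 0 t := by
  rw [intervalIntegrable_iff]
  apply Measure.integrableOn_of_bounded (M := Real.exp (2 * φ * |t|) * hi)
  · exact measure_Ioc_lt_top.ne
  · exact ((Real.measurable_exp.comp ((measurable_const.sub measurable_id).const_mul φ).neg).mul hm).aestronglyMeasurable
  · apply ae_restrict_of_forall_mem measurableSet_uIoc
    intro s hs
    have hst : |s| ≤ |t| := by
      rcases le_total 0 t with h | h
      · rw [Set.uIoc_of_le h] at hs
        rw [abs_of_pos hs.1, abs_of_nonneg h]; exact hs.2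
      · rw [Set.uIoc_of_ge h] at hs
        rw [abs_of_nonpos hs.2, abs_of_nonpos h]; exact neg_le_neg hs.1.le
    have h1 : 0 ≤ ℓ s := hlo.le.trans (hb s).1
    have h2 : ℓ s ≤ hi := (hb s).2
    rw [norm_mul, Real.norm_eq_abs, Real.norm_eq_abs, abs_of_nonneg (Real.exp_pos _).le,
      abs_of_nonneg h1]
    have : -(φ * (t - s)) ≤ 2 * φ * |t| := by
      have h3 : -t ≤ |t| := neg_le_abs t
      have h4 : s ≤ |t| := (le_abs_self s).trans hst
      nlinarith [abs_nonneg t]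
    exact mul_le_mul (Real.exp_le_exp.2 this) h2 h1 (Real.exp_pos _).le

lemma traj_continuous {φ lo hi : ℝ} (hφ : 0 < φ) (hlo : 0 < lo) {ℓ : ℝ → ℝ}
    (hm : Measurable ℓ) (hb : ∀ s, ℓ s ∈ Set.Icc lo hi) (h₀ : ℝ) :
    Continuous (traj φ h₀ ℓ) := by
  have hg : ∀ a b : ℝ, IntervalIntegrable (fun s => Real.exp (φ * s) * ℓ s) volume a b := by
    intro a b
    rw [intervalIntegrable_iff]
    apply Measure.integrableOn_of_bounded (M := Real.exp (φ * (|a| + |b|)) * hi)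
    · exact measure_Ioc_lt_top.ne
    · exact ((Real.measurable_exp.comp (measurable_id.const_mul φ)).mul hm).aestronglyMeasurable
    · apply ae_restrict_of_forall_mem measurableSet_uIoc
      intro s hs
      have hst : s ≤ |a| + |b| := by
        rcases le_total a b with h | h
        · rw [Set.uIoc_of_le h] at hs
          have := hs.2; have := le_abs_self b; have := abs_nonneg a; linarith
        · rw [Set.uIoc_of_ge h] at hs
          have := hs.2; have := le_abs_self a; have := abs_nonneg b; linarith
      have h1 : 0 ≤ ℓ s := hlo.le.trans (hb s).1
      rw [norm_mul, Real.norm_eq_abs, Real.norm_eq_abs, abs_of_nonneg (Real.exp_pos _).le,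
        abs_of_nonneg h1]
      exact mul_le_mul (Real.exp_le_exp.2 (by nlinarith)) (hb s).2 h1 (Real.exp_pos _).le
  have hF : Continuous fun t => ∫ s in (0:ℝ)..t, Real.exp (φ * s) * ℓ s :=
    intervalIntegral.continuous_primitive hg 0
  have heq : traj φ h₀ ℓ = fun t => Real.exp (-(φ * t)) * h₀ +
      φ * (Real.exp (-(φ * t)) * ∫ s in (0:ℝ)..t, Real.exp (φ * s) * ℓ s) := by
    funext t
    unfold traj
    congr 2
    rw [← intervalIntegral.integral_const_mul]
    apply intervalIntegral.integral_congr
    intro s _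
    simp only [← mul_assoc, ← Real.exp_add]
    ring_nf
  rw [heq]
  fun_prop

lemma traj_lower {φ lo hi : ℝ} (hφ : 0 < φ) (hlo : 0 < lo) {ℓ : ℝ → ℝ}
    (hb : ∀ s, ℓ s ∈ Set.Icc lo hi) (h₀ : ℝ) {t : ℝ} (ht : 0 ≤ t) :
    Real.exp (-(φ * t)) * h₀ ≤ traj φ h₀ ℓ t := by
  unfold traj
  have : 0 ≤ ∫ s in (0:ℝ)..t, Real.exp (-(φ * (t - s))) * ℓ s := by
    apply intervalIntegral.integral_nonneg ht
    intro u _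
    exact mul_nonneg (Real.exp_pos _).le (hlo.le.trans (hb u).1)
  nlinarith

lemma exp_int {φ : ℝ} (t : ℝ) :
    (∫ s in (0:ℝ)..t, φ * Real.exp (-(φ * (t - s)))) = 1 - Real.exp (-(φ * t)) := by
  have heq : ∀ s : ℝ, -(φ * (t - s)) = φ * s - φ * t := fun s => by ring
  have : (∫ s in (0:ℝ)..t, φ * Real.exp (-(φ * (t - s))))
      = ∫ s in (0:ℝ)..t, Real.exp (φ * s - φ * t) * φ := by
    apply intervalIntegral.integral_congr
    intro s _
    simp only [heq s, mul_comm]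
  rw [this]
  have hderiv : ∀ x ∈ Set.uIcc (0:ℝ) t,
      HasDerivAt (fun s => Real.exp (φ * s - φ * t)) (Real.exp (φ * x - φ * t) * φ) x := by
    intro x _
    have h := (((hasDerivAt_id x).const_mul φ).sub_const (φ * t)).exp
    simpa using h
  rw [intervalIntegral.integral_eq_sub_of_hasDerivAt hderiv]
  · simp [heq]
  · apply Continuous.intervalIntegrable
    fun_prop

lemma traj_upper {φ lo hi : ℝ} (hφ : 0 < φ) (hlo : 0 < lo) (hhi : hi ≤ 1) {ℓ : ℝ → ℝ}
    (hm : Measurable ℓ) (hb : ∀ s, ℓ s ∈ Set.Icc lo hi) {h₀ : ℝ} (hh₀ : 0 ≤ h₀)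
    {t : ℝ} (ht : 0 ≤ t) :
    traj φ h₀ ℓ t ≤ h₀ + 1 := by
  unfold traj
  have h1 : Real.exp (-(φ * t)) * h₀ ≤ h₀ := by
    have := Real.exp_le_one_iff.2 (by nlinarith : -(φ * t) ≤ 0)
    nlinarith
  have h2 : (∫ s in (0:ℝ)..t, Real.exp (-(φ * (t - s))) * ℓ s)
      ≤ ∫ s in (0:ℝ)..t, Real.exp (-(φ * (t - s))) := by
    apply intervalIntegral.integral_mono_on ht (II_aux hφ hlo hm hb t)
    · exact Continuous.intervalIntegrable (by fun_prop) _ _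
    · intro x _
      have := ((hb x).2).trans hhi
      nlinarith [Real.exp_pos (-(φ * (t - x)))]
  have h3 : φ * ∫ s in (0:ℝ)..t, Real.exp (-(φ * (t - s))) = 1 - Real.exp (-(φ * t)) := by
    rw [← exp_int (φ := φ) t, intervalIntegral.integral_const_mul]
  nlinarith [Real.exp_pos (-(φ * t))]

lemma payoff_le {ρ φ σ γ B lo hi : ℝ}
    (hρ : 0 < ρ) (hφ : 0 < φ) (hσ : 1 < σ) (hγ0 : 0 < γ)
    (hγσ : 0 < γ * (σ - 1)) (hB : 0 < B) (hlo : 0 < lo) (hlohi : lo ≤ hi) (hhi : hi < 1)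
    {h₀ : ℝ} (hh₀ : 0 < h₀) {ℓ : ℝ → ℝ} (hm : Measurable ℓ)
    (hb : ∀ s, ℓ s ∈ Set.Icc lo hi) :
    (∫ t in Set.Ioi (0:ℝ), Real.exp (-(ρ * t)) * U2 σ γ B (ℓ t) (traj φ h₀ ℓ t))
      ≤ -(Real.exp (-(ρ + φ * (γ * (σ - 1)))) * hi ^ (1 - σ) / (σ - 1)
          * h₀ ^ (γ * (σ - 1))) := by
  set p := γ * (σ - 1) with hpdef
  have hσ1 : (0:ℝ) < σ - 1 := by linarith
  have h1σ : 1 - σ ≤ 0 := by linarith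
  have hhipos : 0 < hi := lt_of_lt_of_le hlo hlohi
  set f : ℝ → ℝ := fun t => Real.exp (-(ρ * t)) * U2 σ γ B (ℓ t) (traj φ h₀ ℓ t) with hfdef
  -- basic facts about traj
  have htc : Continuous (traj φ h₀ ℓ) := traj_continuous hφ hlo hm hb h₀
  have htpos : ∀ t : ℝ, 0 ≤ t → 0 < traj φ h₀ ℓ t := fun t ht =>
    lt_of_lt_of_le (by positivity) (traj_lower hφ hlo hb h₀ ht)
  -- measurability
  have hmf : Measurable f := by
    unfold f
    unfold U2
    apply Measurable.mul
    · fun_prop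
    apply Measurable.add
    · exact (((hm.pow measurable_const).mul
        (htc.measurable.pow measurable_const)).div_const _)
    · exact ((((measurable_const.sub hm).pow measurable_const).const_mul _).div_const _)
  -- nonpositivity of f on (0, ∞)
  have hnonpos : ∀ t : ℝ, 0 ≤ t → f t ≤ 0 := by
    intro t ht
    have hL : 0 < ℓ t := lt_of_lt_of_le hlo (hb t).1
    have h1L : 0 < 1 - ℓ t := by have := (hb t).2; linarith
    have hh := (htpos t ht).le
    apply mul_nonpos_of_nonneg_of_nonpos (Real.exp_pos _).le
    unfold U2
    have t1 : (ℓ t) ^ (1 - σ) * (traj φ h₀ ℓ t) ^ p / (1 - σ) ≤ 0 :=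
      div_nonpos_of_nonneg_of_nonpos
        (mul_nonneg (Real.rpow_nonneg hL.le _) (Real.rpow_nonneg hh _)) (by linarith)
    have t2 : B ^ (1 - σ) * (1 - ℓ t) ^ (1 - σ) / (1 - σ) ≤ 0 :=
      div_nonpos_of_nonneg_of_nonpos
        (mul_nonneg (Real.rpow_nonneg hB.le _) (Real.rpow_nonneg h1L.le _)) (by linarith)
    linarith
  -- key pointwise bound on (0, 1]
  have key : ∀ t ∈ Set.Ioc (0:ℝ) 1,
      f t ≤ -(Real.exp (-(ρ + φ * p)) * hi ^ (1 - σ) / (σ - 1) * h₀ ^ p) := by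
    intro t ht
    have ht0 : (0:ℝ) ≤ t := ht.1.le
    have hL1 : lo ≤ ℓ t := (hb t).1
    have hL2 : ℓ t ≤ hi := (hb t).2
    have hLpos : 0 < ℓ t := lt_of_lt_of_le hlo hL1
    have h1L : 0 < 1 - ℓ t := by linarith
    have hhge : Real.exp (-(φ * t)) * h₀ ≤ traj φ h₀ ℓ t := traj_lower hφ hlo hb h₀ ht0
    have hterm2 : B ^ (1 - σ) * (1 - ℓ t) ^ (1 - σ) / (1 - σ) ≤ 0 :=
      div_nonpos_of_nonneg_of_nonpos
        (mul_nonneg (Real.rpow_nonneg hB.le _) (Real.rpow_nonneg h1L.le _)) (by linarith)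
    have hstep : hi ^ (1 - σ) * (Real.exp (-(φ * t)) * h₀) ^ p
        ≤ (ℓ t) ^ (1 - σ) * (traj φ h₀ ℓ t) ^ p :=
      mul_le_mul (Real.rpow_le_rpow_of_nonpos hLpos hL2 h1σ)
        (Real.rpow_le_rpow (by positivity) hhge hγσ.le)
        (Real.rpow_nonneg (by positivity) _) (Real.rpow_nonneg hLpos.le _)
    have hsplit : (Real.exp (-(φ * t)) * h₀) ^ p = Real.exp (-(φ * t) * p) * h₀ ^ p := by
      rw [Real.mul_rpow (Real.exp_pos _).le hh₀.le, ← Real.exp_mul]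
    have hexp2 : Real.exp (-(ρ + φ * p)) ≤ Real.exp (-(ρ * t)) * Real.exp (-(φ * t) * p) := by
      rw [← Real.exp_add, Real.exp_le_exp]
      have h1 := ht.1
      have h2 := ht.2
      have e1 : ρ * t ≤ ρ := by nlinarith
      have e2 : φ * t * p ≤ φ * p := by nlinarith [mul_pos hφ hγσ]
      linarith
    calc f t ≤ Real.exp (-(ρ * t)) * ((ℓ t) ^ (1 - σ) * (traj φ h₀ ℓ t) ^ p / (1 - σ)) := by
          unfold f
          unfold U2
          have := (Real.exp_pos (-(ρ * t))).le
          nlinarith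
      _ = -(Real.exp (-(ρ * t)) * ((ℓ t) ^ (1 - σ) * (traj φ h₀ ℓ t) ^ p) / (σ - 1)) := by
          rw [show (1 - σ) = -(σ - 1) by ring, div_neg]; ring
      _ ≤ -(Real.exp (-(ρ * t)) * (hi ^ (1 - σ) * (Real.exp (-(φ * t)) * h₀) ^ p) / (σ - 1)) := by
          apply neg_le_neg
          gcongr
      _ = -((Real.exp (-(ρ * t)) * Real.exp (-(φ * t) * p)) * hi ^ (1 - σ) * h₀ ^ p / (σ - 1)) := by
          rw [hsplit]; ring
      _ ≤ -(Real.exp (-(ρ + φ * p)) * hi ^ (1 - σ) * h₀ ^ p / (σ - 1)) := by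
          apply neg_le_neg
          gcongr
      _ = -(Real.exp (-(ρ + φ * p)) * hi ^ (1 - σ) / (σ - 1) * h₀ ^ p) := by ring
  -- U2 is nonpositive
  have hU2np : ∀ t : ℝ, 0 ≤ t → U2 σ γ B (ℓ t) (traj φ h₀ ℓ t) ≤ 0 := by
    intro t ht
    have hL : 0 < ℓ t := lt_of_lt_of_le hlo (hb t).1
    have h1L : 0 < 1 - ℓ t := by have := (hb t).2; linarith
    have hh := (htpos t ht).le
    unfold U2
    have t1 : (ℓ t) ^ (1 - σ) * (traj φ h₀ ℓ t) ^ p / (1 - σ) ≤ 0 :=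
      div_nonpos_of_nonneg_of_nonpos
        (mul_nonneg (Real.rpow_nonneg hL.le _) (Real.rpow_nonneg hh _)) (by linarith)
    have t2 : B ^ (1 - σ) * (1 - ℓ t) ^ (1 - σ) / (1 - σ) ≤ 0 :=
      div_nonpos_of_nonneg_of_nonpos
        (mul_nonneg (Real.rpow_nonneg hB.le _) (Real.rpow_nonneg h1L.le _)) (by linarith)
    linarith
  -- integrability of f on (0, ∞)
  set C : ℝ := lo ^ (1 - σ) * (h₀ + 1) ^ p / (σ - 1)
      + B ^ (1 - σ) * (1 - hi) ^ (1 - σ) / (σ - 1) with hCdef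
  have hbound : ∀ t ∈ Set.Ioi (0:ℝ), ‖f t‖ ≤ C * Real.exp (-ρ * t) := by
    intro t ht
    have ht0 : (0:ℝ) ≤ t := le_of_lt ht
    have hL1 : lo ≤ ℓ t := (hb t).1
    have hL2 : ℓ t ≤ hi := (hb t).2
    have hLpos : 0 < ℓ t := lt_of_lt_of_le hlo hL1
    have h1L : 0 < 1 - ℓ t := by linarith
    have hh0 : 0 ≤ traj φ h₀ ℓ t := (htpos t ht0).le
    have hhle : traj φ h₀ ℓ t ≤ h₀ + 1 := traj_upper hφ hlo hhi.le hm hb hh₀.le ht0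
    have e1 : (ℓ t) ^ (1 - σ) * (traj φ h₀ ℓ t) ^ p ≤ lo ^ (1 - σ) * (h₀ + 1) ^ p :=
      mul_le_mul (Real.rpow_le_rpow_of_nonpos hlo hL1 h1σ)
        (Real.rpow_le_rpow hh0 hhle hγσ.le) (Real.rpow_nonneg hh0 _)
        (Real.rpow_nonneg hlo.le _)
    have e2 : (1 - ℓ t) ^ (1 - σ) ≤ (1 - hi) ^ (1 - σ) :=
      Real.rpow_le_rpow_of_nonpos (by linarith) (by linarith) h1σ
    have hneq : -(U2 σ γ B (ℓ t) (traj φ h₀ ℓ t))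
        = (ℓ t) ^ (1 - σ) * (traj φ h₀ ℓ t) ^ p / (σ - 1)
          + B ^ (1 - σ) * (1 - ℓ t) ^ (1 - σ) / (σ - 1) := by
      unfold U2
      have hne : (1:ℝ) - σ ≠ 0 := by linarith
      field_simp
      ring
    have hC' : -(U2 σ γ B (ℓ t) (traj φ h₀ ℓ t)) ≤ C := by
      rw [hneq, hCdef]
      refine add_le_add ((div_le_div_iff_of_pos_right hσ1).2 e1) ((div_le_div_iff_of_pos_right hσ1).2 ?_)
      exact mul_le_mul_of_nonneg_left e2 (Real.rpow_nonneg hB.le _)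
    calc ‖f t‖ = Real.exp (-(ρ * t)) * -(U2 σ γ B (ℓ t) (traj φ h₀ ℓ t)) := by
          rw [hfdef]
          simp only [Real.norm_eq_abs, abs_mul, abs_of_nonneg (Real.exp_pos _).le,
            abs_of_nonpos (hU2np t ht0)]
      _ ≤ Real.exp (-(ρ * t)) * C := by
          exact mul_le_mul_of_nonneg_left hC' (Real.exp_pos _).le
      _ = C * Real.exp (-ρ * t) := by rw [neg_mul]; ring
  have hInt : IntegrableOn f (Set.Ioi 0) volume := by
    apply Integrable.mono' ((exp_neg_integrableOn_Ioi 0 hρ).const_mul C)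
    · exact hmf.aestronglyMeasurable.restrict
    · exact (ae_restrict_iff' measurableSet_Ioi).2 (ae_of_all _ hbound)
  -- split the integral
  have hsplit : (∫ t in Set.Ioi (0:ℝ), f t)
      = (∫ t in Set.Ioc (0:ℝ) 1, f t) + ∫ t in Set.Ioi (1:ℝ), f t := by
    rw [← setIntegral_union (Set.Ioc_disjoint_Ioi le_rfl) measurableSet_Ioi
      (hInt.mono_set Set.Ioc_subset_Ioi_self)
      (hInt.mono_set (Set.Ioi_subset_Ioi (by norm_num)))]
    rw [Set.Ioc_union_Ioi_eq_Ioi (by norm_num : (0:ℝ) ≤ 1)]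
  have h2 : (∫ t in Set.Ioi (1:ℝ), f t) ≤ 0 := by
    apply integral_nonpos_of_ae
    refine (ae_restrict_iff' measurableSet_Ioi).2 (ae_of_all _ fun t ht => hnonpos t ?_)
    exact le_of_lt (lt_trans zero_lt_one ht)
  have h1 : (∫ t in Set.Ioc (0:ℝ) 1, f t)
      ≤ -(Real.exp (-(ρ + φ * p)) * hi ^ (1 - σ) / (σ - 1) * h₀ ^ p) := by
    calc (∫ t in Set.Ioc (0:ℝ) 1, f t)
        ≤ ∫ _ in Set.Ioc (0:ℝ) 1,
            -(Real.exp (-(ρ + φ * p)) * hi ^ (1 - σ) / (σ - 1) * h₀ ^ p) :=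
          setIntegral_mono_on (hInt.mono_set Set.Ioc_subset_Ioi_self)
            (integrableOn_const measure_Ioc_lt_top.ne) measurableSet_Ioc key
      _ = -(Real.exp (-(ρ + φ * p)) * hi ^ (1 - σ) / (σ - 1) * h₀ ^ p) := by
          rw [setIntegral_const]
          simp [Real.volume_Ioc]
  calc (∫ t in Set.Ioi (0:ℝ), f t)
      = (∫ t in Set.Ioc (0:ℝ) 1, f t) + ∫ t in Set.Ioi (1:ℝ), f t := hsplit
    _ ≤ -(Real.exp (-(ρ + φ * p)) * hi ^ (1 - σ) / (σ - 1) * h₀ ^ p) := by linarith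

/-- `V(h₀) → −∞` as `h₀ → +∞`. -/
theorem V_tendsto_atBot (ρ φ σ γ B lo hi : ℝ)
    (hρ : 0 < ρ) (hφ : 0 < φ) (hσ : 1 < σ) (hγ0 : 0 < γ) (hγ1 : γ < 1)
    (hγσ : 1 < γ * (σ - 1)) (hB : 0 < B) (hlo : 0 < lo) (hlohi : lo ≤ hi) (hhi : hi < 1) :
    Tendsto (V ρ φ σ γ B lo hi) atTop atBot := by
  set p := γ * (σ - 1) with hpdef
  have hp : 0 < p := lt_trans one_pos hγσ
  set K : ℝ := Real.exp (-(ρ + φ * p)) * hi ^ (1 - σ) / (σ - 1) with hKdef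
  have hσ1 : (0:ℝ) < σ - 1 := by linarith
  have hhipos : 0 < hi := lt_of_lt_of_le hlo hlohi
  have hK : 0 < K := by
    rw [hKdef]
    positivity
  have hbnd : ∀ h₀ : ℝ, 0 < h₀ → V ρ φ σ γ B lo hi h₀ ≤ -(K * h₀ ^ p) := by
    intro h₀ hh₀
    apply csSup_le
    · exact ⟨_, ⟨fun _ => lo, ⟨measurable_const, fun t _ => ⟨le_rfl, hlohi⟩⟩, rfl⟩⟩
    · rintro x ⟨ℓ, ⟨hmeas, hbd⟩, rfl⟩
      set ℓ' : ℝ → ℝ := fun s => if 0 ≤ s then ℓ s else lo with hℓ'def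
      have hm' : Measurable ℓ' :=
        Measurable.ite (measurableSet_le measurable_const measurable_id) hmeas measurable_const
      have hb' : ∀ s, ℓ' s ∈ Set.Icc lo hi := by
        intro s
        by_cases h : 0 ≤ s
        · simpa [hℓ'def, h] using hbd s h
        · simp [hℓ'def, h, le_refl, hlohi]
      have heq : (∫ t in Set.Ioi (0:ℝ), Real.exp (-(ρ * t)) * U2 σ γ B (ℓ t) (traj φ h₀ ℓ t))
          = ∫ t in Set.Ioi (0:ℝ), Real.exp (-(ρ * t)) * U2 σ γ B (ℓ' t) (traj φ h₀ ℓ' t) := by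
        apply setIntegral_congr_fun measurableSet_Ioi
        intro t ht
        have ht0 : (0:ℝ) ≤ t := le_of_lt ht
        have h1 : ℓ' t = ℓ t := by simp [hℓ'def, ht0]
        have h2 : traj φ h₀ ℓ t = traj φ h₀ ℓ' t := by
          unfold traj
          congr 2
          apply intervalIntegral.integral_congr
          intro s hs
          rw [Set.uIcc_of_le ht0] at hs
          simp [hℓ'def, hs.1]
        simp only []
        rw [h1, h2]
      rw [heq]
      have := payoff_le hρ hφ hσ hγ0 (by rw [← hpdef]; exact hp) hB hlo hlohi hhi hh₀ hm' hb'
      calc (∫ t in Set.Ioi (0:ℝ), Real.exp (-(ρ * t)) * U2 σ γ B (ℓ' t) (traj φ h₀ ℓ' t))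
          ≤ -(Real.exp (-(ρ + φ * (γ * (σ - 1)))) * hi ^ (1 - σ) / (σ - 1)
              * h₀ ^ (γ * (σ - 1))) := this
        _ = -(K * h₀ ^ p) := by rw [hKdef, hpdef]
  have htend : Tendsto (fun h₀ : ℝ => -(K * h₀ ^ p)) atTop atBot := by
    apply tendsto_neg_atTop_atBot.comp
    exact (tendsto_rpow_atTop hp).const_mul_atTop hK
  apply tendsto_atBot_mono' atTop _ htend
  filter_upwards [eventually_gt_atTop (0:ℝ)] with h₀ hh₀
  exact hbnd h₀ hh₀
end

section
/- The value function V of the two-good problem is a viscosity supersolution on (0, ∞) of the HJB equation ρV(h) = max_{ℓ ∈ [ℓ̲, ℓ̄]} H(ℓ, h, V'(h)): for every continuously differentiable test function ψ : (0,∞) → ℝ and every point h₀ > 0 at which V − ψ has a local minimum, ρ V(h₀) ≥ max_{ℓ ∈ [ℓ̲, ℓ̄]} H(ℓ, h₀, ψ'(h₀)). -/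
open MeasureTheory Real Set Filter

/-- Current-value Hamiltonian
`H(ℓ, h, p) = ℓ^{1−σ} h^{γ(σ−1)}/(1−σ) + B̃ (1−ℓ)^{1−σ}/(1−σ) + p·φ(ℓ−h)`. -/
noncomputable def Hcv (φ σ γ B ℓ h p : ℝ) : ℝ :=
  U2 σ γ B ℓ h + p * (φ * (ℓ - h))

namespace Visc17

/-! ### Basic trajectory lemmas -/

lemma traj_eq (φ h₀ : ℝ) (ℓ : ℝ → ℝ) (t : ℝ) :
    traj φ h₀ ℓ t
      = Real.exp (-(φ * t)) * (h₀ + φ * ∫ s in (0:ℝ)..t, Real.exp (φ * s) * ℓ s) := by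
  unfold traj
  have h1 : ∀ s : ℝ, Real.exp (-(φ * (t - s))) * ℓ s
      = Real.exp (-(φ * t)) * (Real.exp (φ * s) * ℓ s) := by
    intro s
    rw [← mul_assoc, ← Real.exp_add]
    ring_nf
  simp_rw [h1]
  rw [intervalIntegral.integral_const_mul]
  ring

lemma integral_exp_mul {φ : ℝ} (hφ : φ ≠ 0) (t : ℝ) :
    ∫ s in (0:ℝ)..t, Real.exp (φ * s) = (Real.exp (φ * t) - 1) / φ := by
  have h : ∀ s ∈ Set.uIcc (0:ℝ) t,
      HasDerivAt (fun u => Real.exp (φ * u) / φ) (Real.exp (φ * s)) s := by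
    intro s _
    have h1 : HasDerivAt (fun u : ℝ => φ * u) φ s := by
      simpa using (hasDerivAt_id s).const_mul φ
    have h2 := h1.exp.div_const φ
    rw [mul_div_assoc, div_self hφ, mul_one] at h2
    exact h2
  rw [intervalIntegral.integral_eq_sub_of_hasDerivAt h
    (by apply Continuous.intervalIntegrable; continuity)]
  simp [Real.exp_zero]
  ring

lemma traj_const {φ : ℝ} (hφ : 0 < φ) (h₀ c t : ℝ) :
    traj φ h₀ (fun _ => c) t = Real.exp (-(φ * t)) * (h₀ - c) + c := by
  rw [traj_eq, intervalIntegral.integral_mul_const, integral_exp_mul hφ.ne']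
  have h1 : Real.exp (-(φ * t)) * Real.exp (φ * t) = 1 := by
    rw [← Real.exp_add]; simp
  have h2 : φ * ((Real.exp (φ * t) - 1) / φ * c) = (Real.exp (φ * t) - 1) * c := by
    field_simp
  rw [h2]
  linear_combination c * h1

lemma traj_congr {φ h₀ t : ℝ} (ht : 0 ≤ t) {ℓ₁ ℓ₂ : ℝ → ℝ}
    (h : ∀ s ∈ Set.Ioo 0 t, ℓ₁ s = ℓ₂ s) : traj φ h₀ ℓ₁ t = traj φ h₀ ℓ₂ t := by
  unfold traj
  congr 2
  apply intervalIntegral.integral_congr_ae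
  rw [ae_iff]
  refine measure_mono_null (fun x hx => ?_) (measure_singleton t)
  simp only [Set.mem_setOf_eq, not_forall] at hx
  obtain ⟨hx1, hx2⟩ := hx
  rw [Set.uIoc_of_le ht] at hx1
  by_contra hxt
  simp only [Set.mem_singleton_iff] at hxt
  exact hx2 (by rw [h x ⟨hx1.1, lt_of_le_of_ne hx1.2 hxt⟩])

/-! ### Integrability of the kernel -/

lemma g_II {lo hi : ℝ} {ℓ : ℝ → ℝ} (hm : Measurable ℓ) (hb : ∀ t, ℓ t ∈ Set.Icc lo hi)
    (φ a b : ℝ) : IntervalIntegrable (fun s => Real.exp (φ * s) * ℓ s) volume a b := by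
  rw [intervalIntegrable_iff]
  apply Measure.integrableOn_of_bounded
    (M := Real.exp (|φ| * (|a| + |b|)) * (|lo| + |hi|))
  · rw [Set.uIoc]
    exact (measure_Ioc_lt_top).ne
  · exact ((Real.continuous_exp.comp (continuous_const.mul continuous_id)).measurable.mul
      hm).aestronglyMeasurable
  · refine (ae_restrict_iff' measurableSet_uIoc).mpr (ae_of_all _ ?_)
    intro s hs
    rw [Set.uIoc, Set.mem_Ioc] at hs
    have hs1 : |s| ≤ |a| + |b| := by
      rw [abs_le]
      constructor
      · have h7 := le_of_lt hs.1
        have h9 := le_min (show -(|a|+|b|) ≤ a by linarith [neg_abs_le a, abs_nonneg b])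
          (show -(|a|+|b|) ≤ b by linarith [neg_abs_le b, abs_nonneg a])
        linarith
      · have h8 := hs.2
        have h9 := max_le (show a ≤ |a|+|b| by linarith [le_abs_self a, abs_nonneg b])
          (show b ≤ |a|+|b| by linarith [le_abs_self b, abs_nonneg a])
        linarith
    have hφs : φ * s ≤ |φ| * (|a| + |b|) := by
      calc φ * s ≤ |φ * s| := le_abs_self _
      _ = |φ| * |s| := abs_mul _ _
      _ ≤ |φ| * (|a| + |b|) := by
        apply mul_le_mul_of_nonneg_left hs1 (abs_nonneg _)
    have hℓ : |ℓ s| ≤ |lo| + |hi| := by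
      rcases hb s with ⟨h1, h2⟩
      rw [abs_le]
      constructor
      · have := neg_abs_le lo; have := abs_nonneg hi; linarith
      · have := le_abs_self hi; have := abs_nonneg lo; linarith
    rw [Real.norm_eq_abs, abs_mul, Real.abs_exp]
    apply mul_le_mul (Real.exp_le_exp.2 hφs) hℓ (abs_nonneg _) (Real.exp_pos _).le

lemma traj_continuous {lo hi φ h₀ : ℝ} {ℓ : ℝ → ℝ} (hm : Measurable ℓ)
    (hb : ∀ t, ℓ t ∈ Set.Icc lo hi) : Continuous (traj φ h₀ ℓ) := by
  have he : traj φ h₀ ℓ = fun t =>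
      Real.exp (-(φ * t)) * (h₀ + φ * ∫ s in (0:ℝ)..t, Real.exp (φ * s) * ℓ s) :=
    funext fun t => traj_eq φ h₀ ℓ t
  rw [he]
  exact (Real.continuous_exp.comp (continuous_const.mul continuous_id).neg).mul
    (continuous_const.add (continuous_const.mul
      (intervalIntegral.continuous_primitive (fun a b => g_II hm hb φ a b) 0)))

lemma traj_lower {lo hi φ h₀ t : ℝ} {ℓ : ℝ → ℝ} (hφ : 0 < φ) (hm : Measurable ℓ)
    (hb : ∀ t, ℓ t ∈ Set.Icc lo hi) (ht : 0 ≤ t) :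
    Real.exp (-(φ * t)) * h₀ + lo * (1 - Real.exp (-(φ * t))) ≤ traj φ h₀ ℓ t := by
  rw [traj_eq]
  have hmono : ∫ s in (0:ℝ)..t, Real.exp (φ * s) * lo ≤ ∫ s in (0:ℝ)..t, Real.exp (φ * s) * ℓ s := by
    apply intervalIntegral.integral_mono_on ht
      (g_II measurable_const (fun _ => Set.mem_Icc.2 ⟨le_refl lo, le_refl lo⟩) φ 0 t)
      (g_II hm hb φ 0 t)
    intro s _
    exact mul_le_mul_of_nonneg_left (hb s).1 (Real.exp_pos _).le
  rw [intervalIntegral.integral_mul_const, integral_exp_mul hφ.ne'] at hmono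
  have h1 : Real.exp (-(φ * t)) * Real.exp (φ * t) = 1 := by rw [← Real.exp_add]; simp
  have h2 : φ * ((Real.exp (φ * t) - 1) / φ * lo) = (Real.exp (φ * t) - 1) * lo := by field_simp
  have h3 := Real.exp_pos (-(φ * t))
  have h5 : (Real.exp (φ * t) - 1) * lo ≤ φ * ∫ s in (0:ℝ)..t, Real.exp (φ * s) * ℓ s := by
    rw [← h2]; exact mul_le_mul_of_nonneg_left hmono hφ.le
  have h5' := mul_le_mul_of_nonneg_left h5 h3.le
  have h6 : Real.exp (-(φ * t)) * ((Real.exp (φ * t) - 1) * lo)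
      = lo * (1 - Real.exp (-(φ * t))) := by linear_combination lo * h1
  nlinarith [h5', h6]

lemma traj_upper {lo hi φ h₀ t : ℝ} {ℓ : ℝ → ℝ} (hφ : 0 < φ) (hm : Measurable ℓ)
    (hb : ∀ t, ℓ t ∈ Set.Icc lo hi) (ht : 0 ≤ t) :
    traj φ h₀ ℓ t ≤ Real.exp (-(φ * t)) * h₀ + hi * (1 - Real.exp (-(φ * t))) := by
  rw [traj_eq]
  have hmono : ∫ s in (0:ℝ)..t, Real.exp (φ * s) * ℓ s ≤ ∫ s in (0:ℝ)..t, Real.exp (φ * s) * hi := by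
    apply intervalIntegral.integral_mono_on ht (g_II hm hb φ 0 t)
      (g_II measurable_const (fun _ => Set.mem_Icc.2 ⟨le_refl hi, le_refl hi⟩) φ 0 t)
    intro s _
    exact mul_le_mul_of_nonneg_left (hb s).2 (Real.exp_pos _).le
  rw [intervalIntegral.integral_mul_const, integral_exp_mul hφ.ne'] at hmono
  have h1 : Real.exp (-(φ * t)) * Real.exp (φ * t) = 1 := by rw [← Real.exp_add]; simp
  have h2 : φ * ((Real.exp (φ * t) - 1) / φ * hi) = (Real.exp (φ * t) - 1) * hi := by field_simp
  have h3 := Real.exp_pos (-(φ * t))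
  have h5 : φ * (∫ s in (0:ℝ)..t, Real.exp (φ * s) * ℓ s) ≤ (Real.exp (φ * t) - 1) * hi := by
    rw [← h2]; exact mul_le_mul_of_nonneg_left hmono hφ.le
  have h5' := mul_le_mul_of_nonneg_left h5 h3.le
  have h6 : Real.exp (-(φ * t)) * ((Real.exp (φ * t) - 1) * hi)
      = hi * (1 - Real.exp (-(φ * t))) := by linear_combination hi * h1
  nlinarith [h5', h6]

lemma traj_nonneg {lo hi φ h₀ t : ℝ} {ℓ : ℝ → ℝ} (hφ : 0 < φ) (hlo : 0 ≤ lo) (hm : Measurable ℓ)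
    (hb : ∀ t, ℓ t ∈ Set.Icc lo hi) (hh₀ : 0 ≤ h₀) (ht : 0 ≤ t) :
    0 ≤ traj φ h₀ ℓ t := by
  have h1 := traj_lower (hi := hi) (h₀ := h₀) hφ hm hb ht
  have h3 := Real.exp_pos (-(φ * t))
  have h4 : Real.exp (-(φ * t)) ≤ 1 := Real.exp_le_one_iff.mpr (by nlinarith)
  nlinarith

lemma traj_le_max {lo hi φ h₀ t : ℝ} {ℓ : ℝ → ℝ} (hφ : 0 < φ) (hhi : hi ≤ 1) (hm : Measurable ℓ)
    (hb : ∀ t, ℓ t ∈ Set.Icc lo hi) (hh₀ : 0 ≤ h₀) (ht : 0 ≤ t) :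
    traj φ h₀ ℓ t ≤ max h₀ 1 := by
  have h1 := traj_upper (lo := lo) (h₀ := h₀) hφ hm hb ht
  have h3 := Real.exp_pos (-(φ * t))
  have h4 : Real.exp (-(φ * t)) ≤ 1 := Real.exp_le_one_iff.mpr (by nlinarith)
  have h5 : h₀ ≤ max h₀ 1 := le_max_left _ _
  have h6 : (1:ℝ) ≤ max h₀ 1 := le_max_right _ _
  nlinarith

lemma traj_pos {lo hi φ h₀ t : ℝ} {ℓ : ℝ → ℝ} (hφ : 0 < φ) (hlo : 0 < lo) (hm : Measurable ℓ)
    (hb : ∀ t, ℓ t ∈ Set.Icc lo hi) (hh₀ : 0 ≤ h₀) (ht : 0 < t) :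
    0 < traj φ h₀ ℓ t := by
  have h1 := traj_lower (hi := hi) (h₀ := h₀) hφ hm hb ht.le
  have h3 := Real.exp_pos (-(φ * t))
  have h4 : Real.exp (-(φ * t)) < 1 := by
    rw [Real.exp_lt_one_iff]
    nlinarith
  nlinarith

/-! ### Utility bounds -/

lemma U2_nonpos {σ γ B l h : ℝ} (hσ : 1 < σ) (hB : 0 < B) (hl : 0 ≤ l) (hl1 : l ≤ 1)
    (hh : 0 ≤ h) : U2 σ γ B l h ≤ 0 := by
  unfold U2
  have h1σ : 1 - σ ≤ 0 := by linarith
  have t1 : l ^ (1-σ) * h ^ (γ*(σ-1)) / (1-σ) ≤ 0 :=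
    div_nonpos_of_nonneg_of_nonpos
      (mul_nonneg (Real.rpow_nonneg hl _) (Real.rpow_nonneg hh _)) h1σ
  have t2 : B ^ (1-σ) * (1-l) ^ (1-σ) / (1-σ) ≤ 0 :=
    div_nonpos_of_nonneg_of_nonpos
      (mul_nonneg (Real.rpow_nonneg hB.le _) (Real.rpow_nonneg (by linarith) _)) h1σ
  linarith

lemma U2_bound {σ γ B lo hi l h M : ℝ} (hσ : 1 < σ) (hγσ : 0 < γ * (σ - 1)) (hB : 0 < B)
    (hlo : 0 < lo) (hhi : hi < 1) (hl : l ∈ Set.Icc lo hi) (hh0 : 0 ≤ h) (hhM : h ≤ M) :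
    ‖U2 σ γ B l h‖ ≤ (lo ^ (1-σ) * M ^ (γ*(σ-1)) + B ^ (1-σ) * (1-hi) ^ (1-σ)) / (σ - 1) := by
  have hl0 : 0 < l := lt_of_lt_of_le hlo hl.1
  have hl1 : l ≤ 1 := le_of_lt (lt_of_le_of_lt hl.2 hhi)
  have hU := U2_nonpos (γ := γ) hσ hB hl0.le hl1 hh0
  rw [Real.norm_eq_abs, abs_of_nonpos hU]
  have hσ0 : (1:ℝ) - σ ≠ 0 := by linarith
  have heq : -U2 σ γ B l h
      = (l ^ (1-σ) * h ^ (γ*(σ-1)) + B ^ (1-σ) * (1-l) ^ (1-σ)) / (σ - 1) := by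
    unfold U2
    rw [eq_div_iff (by linarith : (σ:ℝ)-1 ≠ 0)]
    field_simp
    ring
  rw [heq]
  have b1 : l ^ (1-σ) ≤ lo ^ (1-σ) := Real.rpow_le_rpow_of_nonpos hlo hl.1 (by linarith)
  have b2 : h ^ (γ*(σ-1)) ≤ M ^ (γ*(σ-1)) := Real.rpow_le_rpow hh0 hhM hγσ.le
  have b3 : (1-l) ^ (1-σ) ≤ (1-hi) ^ (1-σ) :=
    Real.rpow_le_rpow_of_nonpos (by linarith) (by linarith [hl.2]) (by linarith)
  have hσ' : (0:ℝ) < σ - 1 := by linarith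
  have num : l ^ (1-σ) * h ^ (γ*(σ-1)) + B ^ (1-σ) * (1-l) ^ (1-σ)
      ≤ lo ^ (1-σ) * M ^ (γ*(σ-1)) + B ^ (1-σ) * (1-hi) ^ (1-σ) := by
    have m1 : l ^ (1-σ) * h ^ (γ*(σ-1)) ≤ lo ^ (1-σ) * M ^ (γ*(σ-1)) :=
      mul_le_mul b1 b2 (Real.rpow_nonneg hh0 _) (Real.rpow_nonneg hlo.le _)
    have m2 : B ^ (1-σ) * (1-l) ^ (1-σ) ≤ B ^ (1-σ) * (1-hi) ^ (1-σ) :=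
      mul_le_mul_of_nonneg_left b3 (Real.rpow_nonneg hB.le _)
    linarith
  rw [div_le_div_iff₀ hσ' hσ']
  nlinarith [mul_le_mul_of_nonneg_right num hσ'.le]

/-! ### The payoff integrand -/

noncomputable def F (ρ φ σ γ B : ℝ) (ℓ : ℝ → ℝ) (h₀ : ℝ) (t : ℝ) : ℝ :=
  Real.exp (-(ρ * t)) * U2 σ γ B (ℓ t) (traj φ h₀ ℓ t)

def SS (ρ φ σ γ B lo hi h₀ : ℝ) : Set ℝ :=
  {x | ∃ ℓ : ℝ → ℝ, Admissible lo hi ℓ ∧ x = ∫ t in Set.Ioi (0:ℝ), F ρ φ σ γ B ℓ h₀ t}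

lemma V_eq (ρ φ σ γ B lo hi h₀ : ℝ) : V ρ φ σ γ B lo hi h₀ = sSup (SS ρ φ σ γ B lo hi h₀) := rfl

lemma meas_rpow_comp {ℓ : ℝ → ℝ} (hm : Measurable ℓ) (hpos : ∀ t, 0 < ℓ t) (c : ℝ) :
    Measurable (fun t => ℓ t ^ c) := by
  have he : (fun t => ℓ t ^ c) = fun t => Real.exp (Real.log (ℓ t) * c) := by
    funext t; rw [Real.rpow_def_of_pos (hpos t)]
  rw [he]
  exact Real.measurable_exp.comp ((Real.measurable_log.comp hm).mul measurable_const)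

lemma F_aesm {ρ φ σ γ B lo hi h₀ : ℝ} (hφ : 0 < φ) (hlo : 0 < lo) (hhi : hi < 1)
    (hh₀ : 0 ≤ h₀) {ℓ : ℝ → ℝ} (hm : Measurable ℓ) (hb : ∀ t, ℓ t ∈ Set.Icc lo hi) :
    AEStronglyMeasurable (F ρ φ σ γ B ℓ h₀) (volume.restrict (Set.Ioi 0)) := by
  have hpos : ∀ t, 0 < ℓ t := fun t => lt_of_lt_of_le hlo (hb t).1
  have hpos1 : ∀ t, 0 < 1 - ℓ t := fun t => by have := (hb t).2; linarith
  have m1 : Measurable (fun t => ℓ t ^ (1-σ)) := meas_rpow_comp hm hpos _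
  have m2 : Measurable (fun t => (1 - ℓ t) ^ (1-σ)) :=
    meas_rpow_comp (measurable_const.sub hm) hpos1 _
  have hcont := traj_continuous (lo := lo) (hi := hi) (φ := φ) (h₀ := h₀) hm hb
  have m3 : AEStronglyMeasurable (fun t => traj φ h₀ ℓ t ^ (γ*(σ-1)))
      (volume.restrict (Set.Ioi 0)) := by
    apply ContinuousOn.aestronglyMeasurable ?_ measurableSet_Ioi
    intro t ht
    exact ((Real.continuousAt_rpow_const _ _
      (Or.inl (ne_of_gt (traj_pos hφ hlo hm hb hh₀ ht)))).comp
      hcont.continuousAt).continuousWithinAt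
  have he : F ρ φ σ γ B ℓ h₀ = fun t => Real.exp (-(ρ*t)) *
      (ℓ t ^ (1-σ) * traj φ h₀ ℓ t ^ (γ*(σ-1)) * (1-σ)⁻¹
        + B ^ (1-σ) * (1-ℓ t) ^ (1-σ) * (1-σ)⁻¹) := by
    funext t; unfold F U2; rw [div_eq_mul_inv, div_eq_mul_inv]
  rw [he]
  apply AEStronglyMeasurable.mul
  · exact (Real.continuous_exp.comp (continuous_const.mul continuous_id).neg).aestronglyMeasurable
  apply AEStronglyMeasurable.add
  · exact (m1.aestronglyMeasurable.mul m3).mul aestronglyMeasurable_const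
  · exact ((measurable_const.mul m2).mul_const _).aestronglyMeasurable

lemma F_integrable {ρ φ σ γ B lo hi h₀ : ℝ} (hρ : 0 < ρ) (hφ : 0 < φ) (hσ : 1 < σ)
    (hγσ : 1 < γ * (σ - 1)) (hB : 0 < B) (hlo : 0 < lo) (hhi : hi < 1) (hh₀ : 0 ≤ h₀)
    {ℓ : ℝ → ℝ} (hm : Measurable ℓ) (hb : ∀ t, ℓ t ∈ Set.Icc lo hi) :
    IntegrableOn (F ρ φ σ γ B ℓ h₀) (Set.Ioi 0) volume := by
  set C := (lo ^ (1-σ) * (max h₀ 1) ^ (γ*(σ-1)) + B ^ (1-σ) * (1-hi) ^ (1-σ)) / (σ - 1) with hC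
  have hint : Integrable (fun t => C * Real.exp (-ρ * t)) (volume.restrict (Set.Ioi 0)) :=
    (exp_neg_integrableOn_Ioi 0 hρ).const_mul C
  apply Integrable.mono' hint (F_aesm hφ hlo hhi hh₀ hm hb)
  refine (ae_restrict_iff' measurableSet_Ioi).mpr (ae_of_all _ ?_)
  intro t ht
  rw [Set.mem_Ioi] at ht
  have h1 : ‖F ρ φ σ γ B ℓ h₀ t‖
      = Real.exp (-(ρ*t)) * ‖U2 σ γ B (ℓ t) (traj φ h₀ ℓ t)‖ := by
    unfold F
    rw [norm_mul, Real.norm_eq_abs (Real.exp _), Real.abs_exp]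
  rw [h1]
  have hγσ' : (0:ℝ) < γ * (σ - 1) := by linarith
  have h2 := U2_bound hσ hγσ' hB hlo hhi (hb t)
    (traj_nonneg hφ hlo.le hm hb hh₀ ht.le)
    (traj_le_max hφ hhi.le hm hb hh₀ ht.le)
  calc Real.exp (-(ρ*t)) * ‖U2 σ γ B (ℓ t) (traj φ h₀ ℓ t)‖
      ≤ Real.exp (-(ρ*t)) * C := mul_le_mul_of_nonneg_left h2 (Real.exp_pos _).le
  _ = C * Real.exp (-ρ*t) := by rw [neg_mul]; ring

lemma F_nonpos {ρ φ σ γ B lo hi h₀ : ℝ} (hφ : 0 < φ) (hσ : 1 < σ) (hB : 0 < B)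
    (hlo : 0 < lo) (hhi : hi < 1) (hh₀ : 0 ≤ h₀)
    {ℓ : ℝ → ℝ} (hm : Measurable ℓ) (hb : ∀ t, ℓ t ∈ Set.Icc lo hi) {t : ℝ} (ht : 0 ≤ t) :
    F ρ φ σ γ B ℓ h₀ t ≤ 0 := by
  unfold F
  apply mul_nonpos_of_nonneg_of_nonpos (Real.exp_pos _).le
  exact U2_nonpos hσ hB (le_of_lt (lt_of_lt_of_le hlo (hb t).1))
    (le_of_lt (lt_of_le_of_lt (hb t).2 hhi)) (traj_nonneg hφ hlo.le hm hb hh₀ ht)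

/-! ### Shift identity -/

lemma traj_shift {lo hi : ℝ} (φ h₀ ε s : ℝ) {ℓ : ℝ → ℝ} (hm : Measurable ℓ)
    (hb : ∀ t, ℓ t ∈ Set.Icc lo hi) :
    traj φ h₀ ℓ (ε + s) = traj φ (traj φ h₀ ℓ ε) (fun v => ℓ (v + ε)) s := by
  have hg : ∀ a b : ℝ, IntervalIntegrable (fun u => Real.exp (φ * u) * ℓ u) volume a b :=
    fun a b => g_II hm hb φ a b
  rw [traj_eq, traj_eq, traj_eq]
  have hsplit : ∫ u in (0:ℝ)..(ε+s), Real.exp (φ*u) * ℓ u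
      = (∫ u in (0:ℝ)..ε, Real.exp (φ*u) * ℓ u) + ∫ u in ε..(ε+s), Real.exp (φ*u) * ℓ u :=
    (intervalIntegral.integral_add_adjacent_intervals (hg 0 ε) (hg ε (ε+s))).symm
  have hshift : ∫ v in (0:ℝ)..s, Real.exp (φ*v) * ℓ (v+ε)
      = Real.exp (-(φ*ε)) * ∫ u in ε..(ε+s), Real.exp (φ*u) * ℓ u := by
    have h1 : ∀ v : ℝ, Real.exp (φ*v) * ℓ (v+ε)
        = Real.exp (-(φ*ε)) * (Real.exp (φ*(v+ε)) * ℓ (v+ε)) := by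
      intro v
      rw [← mul_assoc, ← Real.exp_add]
      congr 2
      ring
    simp_rw [h1]
    rw [intervalIntegral.integral_const_mul]
    congr 1
    have h2 := intervalIntegral.integral_comp_add_right (a := 0) (b := s)
      (fun u => Real.exp (φ*u) * ℓ u) ε
    simpa [zero_add, add_comm s ε] using h2
  rw [hsplit, hshift]
  have e1 : Real.exp (-(φ*(ε+s))) = Real.exp (-(φ*s)) * Real.exp (-(φ*ε)) := by
    rw [← Real.exp_add]
    congr 1
    ring
  rw [e1]
  ring

/-! ### Clamping and payoff-set lemmas -/

lemma payoff_congr {ρ φ σ γ B h₀ : ℝ} {ℓ₁ ℓ₂ : ℝ → ℝ}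
    (h : ∀ t, 0 ≤ t → ℓ₁ t = ℓ₂ t) :
    ∫ t in Set.Ioi (0:ℝ), F ρ φ σ γ B ℓ₁ h₀ t = ∫ t in Set.Ioi (0:ℝ), F ρ φ σ γ B ℓ₂ h₀ t := by
  apply setIntegral_congr_fun measurableSet_Ioi
  intro t ht
  rw [Set.mem_Ioi] at ht
  have h2 : traj φ h₀ ℓ₁ t = traj φ h₀ ℓ₂ t :=
    traj_congr ht.le (fun s hs => h s hs.1.le)
  unfold F
  rw [h t ht.le, h2]

noncomputable def cl (lo hi : ℝ) (ℓ : ℝ → ℝ) (t : ℝ) : ℝ := max lo (min (ℓ t) hi)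

lemma cl_mem {lo hi : ℝ} (hlohi : lo ≤ hi) (ℓ : ℝ → ℝ) (t : ℝ) : cl lo hi ℓ t ∈ Set.Icc lo hi :=
  ⟨le_max_left _ _, max_le hlohi (min_le_right _ _)⟩

lemma cl_meas {lo hi : ℝ} {ℓ : ℝ → ℝ} (hm : Measurable ℓ) : Measurable (cl lo hi ℓ) :=
  measurable_const.max (hm.min measurable_const)

lemma cl_eq {lo hi : ℝ} {ℓ : ℝ → ℝ} {t : ℝ} (h : ℓ t ∈ Set.Icc lo hi) : cl lo hi ℓ t = ℓ t := by
  unfold cl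
  rw [min_eq_left h.2, max_eq_right h.1]

lemma SS_nonempty (ρ φ σ γ B lo hi h₀ : ℝ) (hlohi : lo ≤ hi) :
    (SS ρ φ σ γ B lo hi h₀).Nonempty :=
  ⟨_, fun _ => lo, ⟨measurable_const, fun _ _ => ⟨le_refl lo, hlohi⟩⟩, rfl⟩

lemma SS_nonpos {ρ φ σ γ B lo hi h₀ : ℝ} (hφ : 0 < φ) (hσ : 1 < σ) (hB : 0 < B)
    (hlo : 0 < lo) (hlohi : lo ≤ hi) (hhi : hi < 1) (hh₀ : 0 ≤ h₀) :
    ∀ x ∈ SS ρ φ σ γ B lo hi h₀, x ≤ 0 := by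
  rintro x ⟨ℓ, ⟨hm, hbn⟩, rfl⟩
  have hcl : ∀ t, 0 ≤ t → ℓ t = cl lo hi ℓ t := fun t ht => (cl_eq (hbn t ht)).symm
  rw [payoff_congr hcl]
  apply integral_nonpos_of_ae
  refine (ae_restrict_iff' measurableSet_Ioi).mpr (ae_of_all _ ?_)
  intro t ht
  exact F_nonpos hφ hσ hB hlo hhi hh₀ (cl_meas hm) (fun s => cl_mem hlohi ℓ s) (le_of_lt ht)

lemma SS_bddAbove {ρ φ σ γ B lo hi h₀ : ℝ} (hφ : 0 < φ) (hσ : 1 < σ) (hB : 0 < B)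
    (hlo : 0 < lo) (hlohi : lo ≤ hi) (hhi : hi < 1) (hh₀ : 0 ≤ h₀) :
    BddAbove (SS ρ φ σ γ B lo hi h₀) :=
  ⟨0, fun _ hx => SS_nonpos hφ hσ hB hlo hlohi hhi hh₀ _ hx⟩

lemma le_V {ρ φ σ γ B lo hi h₀ : ℝ} (hφ : 0 < φ) (hσ : 1 < σ) (hB : 0 < B)
    (hlo : 0 < lo) (hlohi : lo ≤ hi) (hhi : hi < 1) (hh₀ : 0 ≤ h₀)
    {ℓ : ℝ → ℝ} (hm : Measurable ℓ) (hb : ∀ t, ℓ t ∈ Set.Icc lo hi) :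
    (∫ t in Set.Ioi (0:ℝ), F ρ φ σ γ B ℓ h₀ t) ≤ V ρ φ σ γ B lo hi h₀ := by
  rw [V_eq]
  exact le_csSup (SS_bddAbove hφ hσ hB hlo hlohi hhi hh₀) ⟨ℓ, ⟨hm, fun t _ => hb t⟩, rfl⟩

/-! ### Dynamic programming inequality -/

lemma dpp {ρ φ σ γ B lo hi h₀ : ℝ} (hρ : 0 < ρ) (hφ : 0 < φ) (hσ : 1 < σ)
    (hγσ : 1 < γ * (σ - 1)) (hB : 0 < B) (hlo : 0 < lo) (hlohi : lo ≤ hi) (hhi : hi < 1)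
    (hh₀ : 0 ≤ h₀) {c : ℝ} (hc : c ∈ Set.Icc lo hi) {ε : ℝ} (hε : 0 < ε) :
    (∫ t in Set.Ioc (0:ℝ) ε, F ρ φ σ γ B (fun _ => c) h₀ t)
      + Real.exp (-(ρ * ε)) * V ρ φ σ γ B lo hi (traj φ h₀ (fun _ => c) ε)
      ≤ V ρ φ σ γ B lo hi h₀ := by
  set y := traj φ h₀ (fun _ => c) ε with hy
  have hbc : ∀ t : ℝ, (fun _ => c) t ∈ Set.Icc lo hi := fun _ => hc
  have hy0 : 0 ≤ y := traj_nonneg hφ hlo.le measurable_const hbc hh₀ hε.le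
  have key : ∀ x ∈ SS ρ φ σ γ B lo hi y,
      (∫ t in Set.Ioc (0:ℝ) ε, F ρ φ σ γ B (fun _ => c) h₀ t) + Real.exp (-(ρ*ε)) * x
        ≤ V ρ φ σ γ B lo hi h₀ := by
    rintro x ⟨ℓ', ⟨hm', hb'⟩, rfl⟩
    set ℓ'' := cl lo hi ℓ' with hℓ''
    have hm'' : Measurable ℓ'' := cl_meas hm'
    have hb'' : ∀ t, ℓ'' t ∈ Set.Icc lo hi := fun t => cl_mem hlohi ℓ' t
    have hxeq : ∫ t in Set.Ioi (0:ℝ), F ρ φ σ γ B ℓ' y t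
        = ∫ t in Set.Ioi (0:ℝ), F ρ φ σ γ B ℓ'' y t :=
      payoff_congr (fun t ht => (cl_eq (hb' t ht)).symm)
    rw [hxeq]
    set L : ℝ → ℝ := fun t => if t < ε then c else ℓ'' (t - ε) with hL
    have hmL : Measurable L := Measurable.ite (measurableSet_lt measurable_id measurable_const)
        measurable_const (hm''.comp (measurable_id.sub measurable_const))
    have hbL : ∀ t, L t ∈ Set.Icc lo hi := by
      intro t
      by_cases h : t < ε
      · simp only [hL, if_pos h]; exact hc
      · simp only [hL, if_neg h]; exact hb'' _
    have htrajL : ∀ t, 0 ≤ t → t ≤ ε → traj φ h₀ L t = traj φ h₀ (fun _ => c) t := by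
      intro t ht htε
      exact traj_congr ht (fun u hu => by simp [hL, lt_of_lt_of_le hu.2 htε])
    have htrajLε : traj φ h₀ L ε = y := by rw [htrajL ε hε.le le_rfl, hy]
    have hshift : ∀ u, 0 ≤ u → traj φ h₀ L (u + ε) = traj φ y ℓ'' u := by
      intro u hu
      have h1 : traj φ h₀ L (ε + u) = traj φ (traj φ h₀ L ε) (fun v => L (v + ε)) u :=
        traj_shift φ h₀ ε u hmL hbL
      rw [add_comm u ε, h1, htrajLε]
      apply traj_congr hu
      intro v hv
      have hvε : ¬ (v + ε < ε) := by push_neg; linarith [hv.1.le]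
      simp [hL, hvε]
    have hFL : IntegrableOn (F ρ φ σ γ B L h₀) (Set.Ioi 0) volume :=
      F_integrable hρ hφ hσ hγσ hB hlo hhi hh₀ hmL hbL
    have hsplitset : Set.Ioc (0:ℝ) ε ∪ Set.Ioi ε = Set.Ioi 0 := Set.Ioc_union_Ioi_eq_Ioi hε.le
    have hsplit : ∫ t in Set.Ioi (0:ℝ), F ρ φ σ γ B L h₀ t
        = (∫ t in Set.Ioc (0:ℝ) ε, F ρ φ σ γ B L h₀ t)
          + ∫ t in Set.Ioi ε, F ρ φ σ γ B L h₀ t := by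
      rw [← hsplitset]
      exact setIntegral_union (Set.Ioc_disjoint_Ioi le_rfl) measurableSet_Ioi
        (hFL.mono_set (by rw [← hsplitset]; exact Set.subset_union_left))
        (hFL.mono_set (by rw [← hsplitset]; exact Set.subset_union_right))
    have hpiece1 : ∫ t in Set.Ioc (0:ℝ) ε, F ρ φ σ γ B L h₀ t
        = ∫ t in Set.Ioc (0:ℝ) ε, F ρ φ σ γ B (fun _ => c) h₀ t := by
      apply setIntegral_congr_ae measurableSet_Ioc
      rw [ae_iff]
      refine measure_mono_null (fun t ht => ?_) (measure_singleton ε)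
      simp only [Set.mem_setOf_eq, not_forall] at ht
      obtain ⟨ht1, ht2⟩ := ht
      by_contra htε
      simp only [Set.mem_singleton_iff] at htε
      have htlt : t < ε := lt_of_le_of_ne ht1.2 htε
      refine ht2 ?_
      unfold F
      rw [show L t = c by simp [hL, htlt], htrajL t ht1.1.le ht1.2]
    have hpiece2 : ∫ t in Set.Ioi ε, F ρ φ σ γ B L h₀ t
        = Real.exp (-(ρ*ε)) * ∫ t in Set.Ioi (0:ℝ), F ρ φ σ γ B ℓ'' y t := by
      have e1 : ∫ t in Set.Ioi ε, F ρ φ σ γ B L h₀ t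
          = ∫ u in Set.Ioi (0:ℝ), F ρ φ σ γ B L h₀ (u + ε) := by
        rw [← integral_indicator measurableSet_Ioi, ← integral_indicator measurableSet_Ioi]
        rw [← integral_add_right_eq_self
          (fun t => Set.indicator (Set.Ioi ε) (F ρ φ σ γ B L h₀) t) ε]
        congr 1
        funext u
        by_cases hu : (0:ℝ) < u
        · rw [Set.indicator_of_mem (Set.mem_Ioi.mpr (by linarith : ε < u + ε)),
            Set.indicator_of_mem (Set.mem_Ioi.mpr hu)]
        · rw [Set.indicator_of_notMem (by simp only [Set.mem_Ioi]; linarith),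
            Set.indicator_of_notMem (by simpa using hu)]
      rw [e1, ← integral_const_mul]
      apply setIntegral_congr_fun measurableSet_Ioi
      intro u hu
      rw [Set.mem_Ioi] at hu
      have hLu : L (u + ε) = ℓ'' u := by
        have huε : ¬ (u + ε < ε) := by push_neg; linarith
        simp [hL, huε]
      show F ρ φ σ γ B L h₀ (u + ε) = Real.exp (-(ρ*ε)) * F ρ φ σ γ B ℓ'' y u
      unfold F
      rw [hLu, hshift u hu.le, ← mul_assoc, ← Real.exp_add]
      congr 2
      ring
    have hmem := le_V (ρ := ρ) (γ := γ) hφ hσ hB hlo hlohi hhi hh₀ hmL hbL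
    calc (∫ t in Set.Ioc (0:ℝ) ε, F ρ φ σ γ B (fun _ => c) h₀ t)
          + Real.exp (-(ρ*ε)) * ∫ t in Set.Ioi (0:ℝ), F ρ φ σ γ B ℓ'' y t
        = ∫ t in Set.Ioi (0:ℝ), F ρ φ σ γ B L h₀ t := by rw [hsplit, hpiece1, hpiece2]
      _ ≤ V ρ φ σ γ B lo hi h₀ := hmem
  have hSne := SS_nonempty ρ φ σ γ B lo hi y hlohi
  set A := ∫ t in Set.Ioc (0:ℝ) ε, F ρ φ σ γ B (fun _ => c) h₀ t with hA
  have hee : Real.exp (-(ρ*ε)) * Real.exp (ρ*ε) = 1 := by rw [← Real.exp_add]; simp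
  have h2 : V ρ φ σ γ B lo hi y
      ≤ Real.exp (ρ*ε) * (V ρ φ σ γ B lo hi h₀ - A) := by
    rw [V_eq]
    apply csSup_le hSne
    intro x hx
    have h3 := key x hx
    have h4 : Real.exp (-(ρ*ε)) * x ≤ V ρ φ σ γ B lo hi h₀ - A := by linarith
    have h5 := mul_le_mul_of_nonneg_left h4 (Real.exp_pos (ρ*ε)).le
    have h6 : Real.exp (ρ*ε) * (Real.exp (-(ρ*ε)) * x) = x := by
      rw [← mul_assoc, mul_comm (Real.exp (ρ*ε)), hee, one_mul]
    linarith [h5, h6.symm.le, h6.le]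
  have h7 := mul_le_mul_of_nonneg_left h2 (Real.exp_pos (-(ρ*ε))).le
  have h8 : Real.exp (-(ρ*ε)) * (Real.exp (ρ*ε) * (V ρ φ σ γ B lo hi h₀ - A))
      = V ρ φ σ γ B lo hi h₀ - A := by
    rw [← mul_assoc, hee, one_mul]
  linarith [h7, h8.le, h8.symm.le]

end Visc17

/-- `V` is a viscosity supersolution on `(0,∞)` of the HJB equation
`ρV(h) = max_{ℓ ∈ [ℓ̲, ℓ̄]} H(ℓ, h, V'(h))`. -/
theorem V_viscosity_supersolution (ρ φ σ γ B lo hi : ℝ)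
    (hρ : 0 < ρ) (hφ : 0 < φ) (hσ : 1 < σ) (hγ0 : 0 < γ) (hγ1 : γ < 1)
    (hγσ : 1 < γ * (σ - 1)) (hB : 0 < B) (hlo : 0 < lo) (hlohi : lo ≤ hi) (hhi : hi < 1)
    (ψ : ℝ → ℝ) (hψ : ContDiffOn ℝ 1 ψ (Set.Ioi (0:ℝ)))
    (h₀ : ℝ) (hh₀ : h₀ ∈ Set.Ioi (0:ℝ))
    (hmin : IsLocalMinOn (fun h => V ρ φ σ γ B lo hi h - ψ h) (Set.Ioi (0:ℝ)) h₀) :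
    sSup ((fun ℓ => Hcv φ σ γ B ℓ h₀ (deriv ψ h₀)) '' Set.Icc lo hi) ≤
      ρ * V ρ φ σ γ B lo hi h₀ := by
  rw [Set.mem_Ioi] at hh₀
  have hne : ((fun ℓ => Hcv φ σ γ B ℓ h₀ (deriv ψ h₀)) '' Set.Icc lo hi).Nonempty :=
    ⟨_, ⟨lo, ⟨le_refl lo, hlohi⟩, rfl⟩⟩
  apply csSup_le hne
  rintro z ⟨c, hc, rfl⟩
  set p := deriv ψ h₀ with hp
  set hcf : ℝ → ℝ := fun ε => Real.exp (-(φ * ε)) * (h₀ - c) + c with hhcf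
  have hcf_eq : ∀ ε, traj φ h₀ (fun _ => c) ε = hcf ε := fun ε => Visc17.traj_const hφ h₀ c ε
  have hcf0 : hcf 0 = h₀ := by simp [hhcf]
  have hcpos : 0 < c := lt_of_lt_of_le hlo hc.1
  have hcf_cont : Continuous hcf :=
    ((Real.continuous_exp.comp (continuous_const.mul continuous_id).neg).mul
      continuous_const).add continuous_const
  have hcf_pos : ∀ ε, 0 ≤ ε → 0 < hcf ε := by
    intro ε hε
    have h1 := Real.exp_pos (-(φ*ε))
    have h2 : Real.exp (-(φ*ε)) ≤ 1 := Real.exp_le_one_iff.mpr (by nlinarith)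
    simp only [hhcf]
    nlinarith
  have hψd : HasDerivAt ψ p h₀ :=
    ((hψ.differentiableOn one_ne_zero).differentiableAt (Ioi_mem_nhds hh₀)).hasDerivAt
  have hhcf_d : HasDerivAt hcf (φ * (c - h₀)) 0 := by
    have h1 : HasDerivAt (fun ε : ℝ => -(φ * ε)) (-φ) 0 := by
      simpa using ((hasDerivAt_id (0:ℝ)).const_mul φ).fun_neg
    have h2 := (h1.exp.mul_const (h₀ - c)).add_const c
    have e : Real.exp (-(φ * 0)) * -φ * (h₀ - c) = φ * (c - h₀) := by
      rw [mul_zero, neg_zero, Real.exp_zero]; ring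
    rw [e] at h2
    exact h2
  set f : ℝ → ℝ := fun t => Real.exp (-(ρ*t)) * U2 σ γ B c (hcf t) with hf
  set G : ℝ → ℝ := fun ε => (∫ t in (0:ℝ)..ε, f t)
      + Real.exp (-(ρ*ε)) * (ψ (hcf ε) - ψ h₀)
      - (1 - Real.exp (-(ρ*ε))) * V ρ φ σ γ B lo hi h₀ with hG
  -- derivative of the integral part
  have hII : IntervalIntegrable f volume 0 0 := by
    rw [intervalIntegrable_iff]
    have he : Set.uIoc (0:ℝ) 0 = ∅ := by rw [Set.uIoc]; simp
    rw [he]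
    exact integrableOn_empty
  set s : Set ℝ := hcf ⁻¹' (Set.Ioi 0) with hs
  have hs_open : IsOpen s := isOpen_Ioi.preimage hcf_cont
  have h0s : (0:ℝ) ∈ s := by
    simp only [hs, Set.mem_preimage, hcf0, Set.mem_Ioi]
    exact hh₀
  have hf_contOn : ContinuousOn f s := by
    intro t ht
    simp only [hs, Set.mem_preimage, Set.mem_Ioi] at ht
    have hU : ContinuousAt (fun u => U2 σ γ B c (hcf u)) t := by
      unfold U2
      apply ContinuousAt.add
      · apply ContinuousAt.div_const
        apply ContinuousAt.mul continuousAt_const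
        exact (Real.continuousAt_rpow_const _ _ (Or.inl (ne_of_gt ht))).comp
          hcf_cont.continuousAt
      · exact continuousAt_const
    exact (((Real.continuous_exp.comp
      (continuous_const.mul continuous_id).neg).continuousAt).mul hU).continuousWithinAt
  have hI1 : HasDerivAt (fun u => ∫ t in (0:ℝ)..u, f t) (U2 σ γ B c h₀) 0 := by
    have h1 := intervalIntegral.integral_hasDerivAt_right hII
      (hf_contOn.stronglyMeasurableAtFilter hs_open 0 h0s)
      (hf_contOn.continuousAt (hs_open.mem_nhds h0s))
    have h2 : f 0 = U2 σ γ B c h₀ := by simp [hf, hcf0]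
    rwa [h2] at h1
  have hE : HasDerivAt (fun ε : ℝ => Real.exp (-(ρ*ε))) (-ρ) 0 := by
    have h1 : HasDerivAt (fun ε : ℝ => -(ρ * ε)) (-ρ) 0 := by
      simpa using ((hasDerivAt_id (0:ℝ)).const_mul ρ).fun_neg
    have h2 := h1.exp
    simpa using h2
  have hq : HasDerivAt (fun ε => ψ (hcf ε) - ψ h₀) (p * (φ*(c-h₀))) 0 := by
    have hψd' : HasDerivAt ψ p (hcf 0) := by rw [hcf0]; exact hψd
    exact (hψd'.comp 0 hhcf_d).sub_const _
  have hprod : HasDerivAt (fun ε => Real.exp (-(ρ*ε)) * (ψ (hcf ε) - ψ h₀))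
      (p * (φ*(c-h₀))) 0 := by
    have h1 := hE.mul hq
    have h2 : -ρ * (ψ (hcf 0) - ψ h₀) + Real.exp (-(ρ*0)) * (p * (φ*(c-h₀)))
        = p * (φ*(c-h₀)) := by
      rw [hcf0]
      simp
    rwa [h2] at h1
  have hlast : HasDerivAt (fun ε => (1 - Real.exp (-(ρ*ε))) * V ρ φ σ γ B lo hi h₀)
      (ρ * V ρ φ σ γ B lo hi h₀) 0 := by
    have h1 := ((hasDerivAt_const (0:ℝ) (1:ℝ)).sub hE).mul_const (V ρ φ σ γ B lo hi h₀)
    have h2 : (0 - -ρ) * V ρ φ σ γ B lo hi h₀ = ρ * V ρ φ σ γ B lo hi h₀ := by ring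
    rwa [h2] at h1
  have hGd : HasDerivAt G
      (U2 σ γ B c h₀ + p * (φ*(c-h₀)) - ρ * V ρ φ σ γ B lo hi h₀) 0 :=
    (hI1.add hprod).sub hlast
  have hG0 : G 0 = 0 := by
    simp [hG, hcf0]
  -- eventual nonpositivity of G on the right
  have hmin' : ∀ᶠ y in nhdsWithin h₀ (Set.Ioi 0),
      V ρ φ σ γ B lo hi h₀ - ψ h₀ ≤ V ρ φ σ γ B lo hi y - ψ y := hmin
  have htend : Tendsto hcf (nhdsWithin 0 (Set.Ioi 0)) (nhdsWithin h₀ (Set.Ioi 0)) := by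
    apply tendsto_nhdsWithin_of_tendsto_nhds_of_eventually_within
    · have h1 := hcf_cont.continuousAt (x := 0)
      rw [ContinuousAt, hcf0] at h1
      exact h1.mono_left nhdsWithin_le_nhds
    · exact eventually_nhdsWithin_of_forall (fun ε hε => hcf_pos ε (le_of_lt hε))
  have hev1 := htend.eventually hmin'
  have hev2 : ∀ᶠ ε in nhdsWithin 0 (Set.Ioi 0), G ε ≤ 0 := by
    filter_upwards [hev1, self_mem_nhdsWithin] with ε hε1 hε2
    rw [Set.mem_Ioi] at hε2
    have hdpp := Visc17.dpp hρ hφ hσ hγσ hB hlo hlohi hhi hh₀.le hc hε2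
    rw [hcf_eq ε] at hdpp
    have hint_eq : ∫ t in Set.Ioc (0:ℝ) ε, Visc17.F ρ φ σ γ B (fun _ => c) h₀ t
        = ∫ t in (0:ℝ)..ε, f t := by
      rw [intervalIntegral.integral_of_le hε2.le]
      apply setIntegral_congr_fun measurableSet_Ioc
      intro t _
      show Real.exp (-(ρ*t)) * U2 σ γ B c (traj φ h₀ (fun _ => c) t)
        = Real.exp (-(ρ*t)) * U2 σ γ B c (hcf t)
      rw [hcf_eq t]
    rw [hint_eq] at hdpp
    have hEpos := Real.exp_pos (-(ρ*ε))
    have h4 := mul_le_mul_of_nonneg_left hε1 hEpos.le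
    simp only [hG]
    nlinarith [h4, hdpp]
  -- pass to the limit
  have hslope := hasDerivAt_iff_tendsto_slope.mp hGd
  have hmono : nhdsWithin (0:ℝ) (Set.Ioi 0) ≤ nhdsWithin 0 {(0:ℝ)}ᶜ :=
    nhdsWithin_mono 0 (fun x hx => ne_of_gt hx)
  have hslope2 : Tendsto (fun ε => G ε / ε) (nhdsWithin 0 (Set.Ioi 0))
      (nhds (U2 σ γ B c h₀ + p * (φ*(c-h₀)) - ρ * V ρ φ σ γ B lo hi h₀)) := by
    have h1 := hslope.mono_left hmono
    have h2 : ∀ ε : ℝ, slope G 0 ε = G ε / ε := by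
      intro ε
      rw [slope_def_field, hG0]
      simp
    exact h1.congr h2
  have hD : U2 σ γ B c h₀ + p * (φ*(c-h₀)) - ρ * V ρ φ σ γ B lo hi h₀ ≤ 0 := by
    apply le_of_tendsto hslope2
    filter_upwards [hev2, self_mem_nhdsWithin] with ε h1 h2
    rw [Set.mem_Ioi] at h2
    exact div_nonpos_of_nonpos_of_nonneg h1 h2.le
  show U2 σ γ B c h₀ + p * (φ * (c - h₀)) ≤ ρ * V ρ φ σ γ B lo hi h₀
  linarith
end

section
/- The value function V of the two-good problem satisfies the Dynamic Programming Principle: for every h₀ ≥ 0 and every t > 0, V(h₀) = sup over measurable controls ℓ : [0,∞) → [ℓ̲, ℓ̄] of { ∫₀ᵗ e^{−ρs} U(ℓ(s), h^{h₀,ℓ}(s)) ds + e^{−ρt} V(h^{h₀,ℓ}(t)) }, where U(ℓ, h) = ℓ^{1−σ} h^{γ(σ−1)} / (1−σ) + B̃ (1−ℓ)^{1−σ} / (1−σ). -/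
open MeasureTheory Real Set Filter

namespace DPPaux

open intervalIntegral

/-- Globally admissible controls. -/
def GAdm (lo hi : ℝ) (ℓ : ℝ → ℝ) : Prop := Measurable ℓ ∧ ∀ u, ℓ u ∈ Set.Icc lo hi

lemma GAdm.adm {lo hi : ℝ} {ℓ : ℝ → ℝ} (h : GAdm lo hi ℓ) : Admissible lo hi ℓ :=
  ⟨h.1, fun u _ => h.2 u⟩

/-- Regularization of an admissible control into a globally admissible one. -/
noncomputable def reg (lo : ℝ) (ℓ : ℝ → ℝ) (u : ℝ) : ℝ := if 0 ≤ u then ℓ u else lo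

lemma reg_gadm {lo hi : ℝ} {ℓ : ℝ → ℝ} (hlohi : lo ≤ hi) (h : Admissible lo hi ℓ) :
    GAdm lo hi (reg lo ℓ) := by
  refine ⟨Measurable.ite (measurableSet_le measurable_const measurable_id) h.1
    measurable_const, fun u => ?_⟩
  by_cases hu : 0 ≤ u
  · simpa [reg, hu] using h.2 u hu
  · simp only [reg, hu, if_false]
    exact ⟨le_rfl, hlohi⟩

lemma reg_eqOn {lo : ℝ} {ℓ : ℝ → ℝ} : ∀ u, 0 ≤ u → reg lo ℓ u = ℓ u := by
  intro u hu; simp [reg, hu]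

/-- The discounted utility integrand. -/
noncomputable def F (ρ φ σ γ B h₀ : ℝ) (ℓ : ℝ → ℝ) (s : ℝ) : ℝ :=
  Real.exp (-(ρ * s)) * U2 σ γ B (ℓ s) (traj φ h₀ ℓ s)

variable {ρ φ σ γ B lo hi : ℝ}

/-- Rewriting the trajectory via a primitive. -/
lemma traj_eq (φ h₀ : ℝ) (ℓ : ℝ → ℝ) (u : ℝ) :
    traj φ h₀ ℓ u =
      Real.exp (-(φ * u)) * (h₀ + φ * ∫ v in (0:ℝ)..u, Real.exp (φ * v) * ℓ v) := by
  unfold traj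
  have h1 : ∀ v ∈ Set.uIcc (0:ℝ) u, Real.exp (-(φ * (u - v))) * ℓ v
      = Real.exp (-(φ * u)) * (Real.exp (φ * v) * ℓ v) := by
    intro v _
    rw [← mul_assoc, ← Real.exp_add]
    ring_nf
  rw [intervalIntegral.integral_congr (g := fun v => Real.exp (-(φ * u)) * (Real.exp (φ * v) * ℓ v))
    (fun v hv => h1 v hv), intervalIntegral.integral_const_mul]
  ring

/-- Interval integrability of the exponentially weighted control. -/
lemma gint (hlo : 0 < lo) {ℓ : ℝ → ℝ} (hg : GAdm lo hi ℓ) (c a b : ℝ) :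
    IntervalIntegrable (fun v => Real.exp (c * v) * ℓ v) volume a b := by
  obtain ⟨hm, hb⟩ := hg
  have hhi : 0 ≤ hi := le_trans hlo.le (le_trans (hb 0).1 (hb 0).2)
  rw [intervalIntegrable_iff]
  refine Integrable.mono' (g := fun _ => Real.exp (|c| * (|a| + |b|)) * hi)
    (integrableOn_const ?_)
    (((Real.measurable_exp.comp (measurable_id.const_mul c)).mul hm).aestronglyMeasurable) ?_
  · rw [Set.uIoc]; exact measure_Ioc_lt_top.ne
  · refine (ae_restrict_mem measurableSet_uIoc).mono fun v hv => ?_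
    have hv' : |v| ≤ |a| + |b| := by
      rcases Set.mem_uIoc.1 hv with ⟨h1, h2⟩ | ⟨h1, h2⟩ <;> rw [abs_le] <;> constructor <;>
        nlinarith [le_abs_self a, neg_abs_le a, le_abs_self b, neg_abs_le b]
    have h1 : Real.exp (c * v) ≤ Real.exp (|c| * (|a| + |b|)) := by
      refine Real.exp_le_exp.2 ?_
      calc c * v ≤ |c * v| := le_abs_self _
        _ = |c| * |v| := abs_mul _ _
        _ ≤ |c| * (|a| + |b|) := mul_le_mul_of_nonneg_left hv' (abs_nonneg c)
    have h2 : |ℓ v| ≤ hi := abs_le.2 ⟨by linarith [(hb v).1], (hb v).2⟩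
    calc ‖Real.exp (c * v) * ℓ v‖ = Real.exp (c * v) * |ℓ v| := by
          rw [norm_mul, Real.norm_eq_abs, Real.norm_eq_abs, abs_of_pos (Real.exp_pos _)]
      _ ≤ Real.exp (|c| * (|a| + |b|)) * hi :=
          mul_le_mul h1 h2 (abs_nonneg _) (Real.exp_pos _).le

lemma traj_nonneg (hφ : 0 < φ) (hlo : 0 < lo) {ℓ : ℝ → ℝ} (h : Admissible lo hi ℓ)
    {h₀ : ℝ} (hh₀ : 0 ≤ h₀) {u : ℝ} (hu : 0 ≤ u) : 0 ≤ traj φ h₀ ℓ u := by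
  unfold traj
  refine add_nonneg (mul_nonneg (Real.exp_pos _).le hh₀) (mul_nonneg hφ.le ?_)
  refine intervalIntegral.integral_nonneg hu fun v hv => ?_
  exact mul_nonneg (Real.exp_pos _).le (le_trans hlo.le ((h.2 v hv.1).1))
lemma exp_integral (hφ : 0 < φ) (u : ℝ) :
    ∫ v in (0:ℝ)..u, Real.exp (φ * v) = (Real.exp (φ * u) - 1) / φ := by
  rw [intervalIntegral.integral_comp_mul_left (fun v => Real.exp v) hφ.ne']
  simp [integral_exp, div_eq_inv_mul]

lemma traj_le (hφ : 0 < φ) (hlo : 0 < lo) {ℓ : ℝ → ℝ} (hg : GAdm lo hi ℓ)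
    {h₀ : ℝ} (hh₀ : 0 ≤ h₀) {u : ℝ} (hu : 0 ≤ u) : traj φ h₀ ℓ u ≤ h₀ + hi := by
  have hhi : 0 ≤ hi := le_trans hlo.le (le_trans (hg.2 0).1 (hg.2 0).2)
  rw [traj_eq]
  have hJ : (∫ v in (0:ℝ)..u, Real.exp (φ * v) * ℓ v)
      ≤ ∫ v in (0:ℝ)..u, Real.exp (φ * v) * hi := by
    refine intervalIntegral.integral_mono_on hu (gint hlo hg φ 0 u)
      (((Real.continuous_exp.comp (continuous_const.mul continuous_id)).mul
        continuous_const).intervalIntegrable 0 u) fun v _ => ?_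
    exact mul_le_mul_of_nonneg_left (hg.2 v).2 (Real.exp_pos _).le
  have hE : (∫ v in (0:ℝ)..u, Real.exp (φ * v) * hi) = (Real.exp (φ * u) - 1) / φ * hi := by
    rw [intervalIntegral.integral_mul_const, exp_integral hφ]
  rw [hE] at hJ
  have he1 : Real.exp (-(φ * u)) * Real.exp (φ * u) = 1 := by
    rw [← Real.exp_add]; simp
  have he2 : Real.exp (-(φ * u)) ≤ 1 :=
    Real.exp_le_one_iff.2 (by nlinarith)
  have he3 : (0:ℝ) < Real.exp (-(φ * u)) := Real.exp_pos _
  have key : Real.exp (-(φ * u)) * (h₀ + φ * ((Real.exp (φ * u) - 1) / φ * hi)) ≤ h₀ + hi := by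
    have hφne : φ ≠ 0 := hφ.ne'
    have : φ * ((Real.exp (φ * u) - 1) / φ * hi) = (Real.exp (φ * u) - 1) * hi := by
      field_simp
    rw [this]
    nlinarith [mul_le_mul_of_nonneg_right he2 hh₀]
  calc Real.exp (-(φ * u)) * (h₀ + φ * ∫ v in (0:ℝ)..u, Real.exp (φ * v) * ℓ v)
      ≤ Real.exp (-(φ * u)) * (h₀ + φ * ((Real.exp (φ * u) - 1) / φ * hi)) := by
        refine mul_le_mul_of_nonneg_left ?_ he3.le
        nlinarith
    _ ≤ h₀ + hi := key

lemma traj_continuous (hlo : 0 < lo) {ℓ : ℝ → ℝ} (hg : GAdm lo hi ℓ) (h₀ : ℝ) :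
    Continuous (fun u => traj φ h₀ ℓ u) := by
  have hJ : Continuous (fun u => ∫ v in (0:ℝ)..u, Real.exp (φ * v) * ℓ v) :=
    intervalIntegral.continuous_primitive (fun a b => gint hlo hg φ a b) 0
  have : Continuous (fun u => Real.exp (-(φ * u)) *
      (h₀ + φ * ∫ v in (0:ℝ)..u, Real.exp (φ * v) * ℓ v)) := by
    exact (Real.continuous_exp.comp ((continuous_const.mul continuous_id).neg)).mul
      (continuous_const.add (continuous_const.mul hJ))
  simpa only [← traj_eq] using this

/-- The semigroup property of the trajectory. -/
lemma traj_semigroup (hφ : 0 < φ) (hlo : 0 < lo) {ℓ : ℝ → ℝ} (hg : GAdm lo hi ℓ)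
    (h₀ : ℝ) {t s : ℝ} (ht : 0 ≤ t) (hs : 0 ≤ s) :
    traj φ h₀ ℓ (s + t) = traj φ (traj φ h₀ ℓ t) (fun v => ℓ (v + t)) s := by
  set J : ℝ → ℝ := fun u => ∫ v in (0:ℝ)..u, Real.exp (φ * v) * ℓ v with hJdef
  have hK : (∫ v in (0:ℝ)..s, Real.exp (φ * v) * ℓ (v + t))
      = Real.exp (-(φ * t)) * (J (s + t) - J t) := by
    have h1 : ∀ v ∈ Set.uIcc (0:ℝ) s, Real.exp (φ * v) * ℓ (v + t)
        = (fun u => Real.exp (-(φ * t)) * (Real.exp (φ * u) * ℓ u)) (v + t) := by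
      intro v _
      simp only
      rw [← mul_assoc, ← Real.exp_add]
      ring_nf
    rw [intervalIntegral.integral_congr h1,
      intervalIntegral.integral_comp_add_right (fun u => Real.exp (-(φ * t)) * (Real.exp (φ * u) * ℓ u)) t,
      intervalIntegral.integral_const_mul]
    congr 1
    have hadj : (∫ u in (0:ℝ)..t, Real.exp (φ * u) * ℓ u)
        + ∫ u in t..(s + t), Real.exp (φ * u) * ℓ u = J (s + t) := by
      rw [hJdef]
      exact intervalIntegral.integral_add_adjacent_intervals (gint hlo hg φ 0 t)
        (gint hlo hg φ t (s + t))
    have : (∫ u in (0:ℝ)+t..s+t, Real.exp (φ * u) * ℓ u) = ∫ u in t..(s + t), Real.exp (φ * u) * ℓ u := by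
      norm_num
    rw [this]
    rw [hJdef] at hadj ⊢
    linarith
  rw [traj_eq φ h₀ ℓ (s + t), traj_eq φ (traj φ h₀ ℓ t) (fun v => ℓ (v + t)) s, hK,
    traj_eq φ h₀ ℓ t]
  have he : Real.exp (-(φ * (s + t))) = Real.exp (-(φ * s)) * Real.exp (-(φ * t)) := by
    rw [← Real.exp_add]; ring_nf
  rw [he]
  ring
/-- Uniform bound constant for the utility. -/
noncomputable def Mb (σ γ B lo hi C : ℝ) : ℝ :=
  (lo ^ (1 - σ) * C ^ (γ * (σ - 1)) + B ^ (1 - σ) * (1 - hi) ^ (1 - σ)) / (σ - 1)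

lemma Mb_nonneg (hσ : 1 < σ) (hγσ : 0 < γ * (σ - 1)) (hB : 0 < B) (hlo : 0 < lo)
    (hhi : hi < 1) {C : ℝ} (hC : 0 ≤ C) : 0 ≤ Mb σ γ B lo hi C := by
  unfold Mb
  have h1 : (0:ℝ) ≤ lo ^ (1 - σ) := (Real.rpow_pos_of_pos hlo _).le
  have h2 : (0:ℝ) ≤ C ^ (γ * (σ - 1)) := Real.rpow_nonneg hC _
  have h3 : (0:ℝ) ≤ B ^ (1 - σ) := (Real.rpow_pos_of_pos hB _).le
  have h4 : (0:ℝ) ≤ (1 - hi) ^ (1 - σ) := (Real.rpow_pos_of_pos (by linarith) _).le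
  have h5 : (0:ℝ) < σ - 1 := by linarith
  positivity

lemma U2_nonpos (hσ : 1 < σ) (hγσ : 0 < γ * (σ - 1)) (hB : 0 < B) (hlo : 0 < lo)
    (hhi : hi < 1) {x h : ℝ} (hx : x ∈ Set.Icc lo hi) (hh : 0 ≤ h) :
    U2 σ γ B x h ≤ 0 := by
  unfold U2
  have hx0 : 0 < x := lt_of_lt_of_le hlo hx.1
  have h1x : 0 < 1 - x := by have := hx.2; linarith
  have hA : 0 ≤ x ^ (1 - σ) * h ^ (γ * (σ - 1)) :=
    mul_nonneg (Real.rpow_pos_of_pos hx0 _).le (Real.rpow_nonneg hh _)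
  have hB' : 0 ≤ B ^ (1 - σ) * (1 - x) ^ (1 - σ) :=
    mul_nonneg (Real.rpow_pos_of_pos hB _).le (Real.rpow_pos_of_pos h1x _).le
  have h1σ : 1 - σ < 0 := by linarith
  have t1 : x ^ (1 - σ) * h ^ (γ * (σ - 1)) / (1 - σ) ≤ 0 :=
    div_nonpos_iff.2 (Or.inl ⟨hA, h1σ.le⟩)
  have t2 : B ^ (1 - σ) * (1 - x) ^ (1 - σ) / (1 - σ) ≤ 0 :=
    div_nonpos_iff.2 (Or.inl ⟨hB', h1σ.le⟩)
  linarith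

lemma U2_lower (hσ : 1 < σ) (hγσ : 0 < γ * (σ - 1)) (hB : 0 < B) (hlo : 0 < lo)
    (hlohi : lo ≤ hi) (hhi : hi < 1) {x h C : ℝ} (hx : x ∈ Set.Icc lo hi)
    (hh : 0 ≤ h) (hhC : h ≤ C) : -(Mb σ γ B lo hi C) ≤ U2 σ γ B x h := by
  have hx0 : 0 < x := lt_of_lt_of_le hlo hx.1
  have h1x : 0 < 1 - x := by have := hx.2; linarith
  have h1hi : 0 < 1 - hi := by linarith
  have h1σ : (1 - σ) ≤ 0 := by linarith
  have hσ1 : 0 < σ - 1 := by linarith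
  have e1 : x ^ (1 - σ) ≤ lo ^ (1 - σ) := Real.rpow_le_rpow_of_nonpos hlo hx.1 h1σ
  have e2 : h ^ (γ * (σ - 1)) ≤ C ^ (γ * (σ - 1)) := Real.rpow_le_rpow hh hhC hγσ.le
  have e3 : (1 - x) ^ (1 - σ) ≤ (1 - hi) ^ (1 - σ) :=
    Real.rpow_le_rpow_of_nonpos h1hi (by linarith [hx.2]) h1σ
  have hA : x ^ (1 - σ) * h ^ (γ * (σ - 1)) ≤ lo ^ (1 - σ) * C ^ (γ * (σ - 1)) :=
    mul_le_mul e1 e2 (Real.rpow_nonneg hh _) (Real.rpow_pos_of_pos hlo _).le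
  have hB2 : B ^ (1 - σ) * (1 - x) ^ (1 - σ) ≤ B ^ (1 - σ) * (1 - hi) ^ (1 - σ) :=
    mul_le_mul_of_nonneg_left e3 (Real.rpow_pos_of_pos hB _).le
  unfold U2 Mb
  have he : ∀ a : ℝ, a / (1 - σ) = -(a / (σ - 1)) := by
    intro a
    rw [← div_neg]
    ring_nf
  rw [he, he]
  have hdiv : (x ^ (1 - σ) * h ^ (γ * (σ - 1))) / (σ - 1)
        + (B ^ (1 - σ) * (1 - x) ^ (1 - σ)) / (σ - 1)
      ≤ (lo ^ (1 - σ) * C ^ (γ * (σ - 1)) + B ^ (1 - σ) * (1 - hi) ^ (1 - σ)) / (σ - 1) := by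
    rw [← add_div]
    exact (div_le_div_iff_of_pos_right hσ1).2 (by linarith)
  linarith
lemma F_measurable (hlo : 0 < lo) {ℓ : ℝ → ℝ} (hg : GAdm lo hi ℓ) (ρ σ γ B h₀ : ℝ) :
    Measurable (F ρ φ σ γ B h₀ ℓ) := by
  have htraj : Measurable fun u => traj φ h₀ ℓ u := (traj_continuous hlo hg h₀).measurable
  have hm := hg.1
  unfold F U2
  fun_prop

lemma F_integrableOn (hρ : 0 < ρ) (hφ : 0 < φ) (hσ : 1 < σ) (hγσ : 0 < γ * (σ - 1))
    (hB : 0 < B) (hlo : 0 < lo) (hlohi : lo ≤ hi) (hhi : hi < 1) {ℓ : ℝ → ℝ}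
    (hg : GAdm lo hi ℓ) {h₀ : ℝ} (hh₀ : 0 ≤ h₀) :
    IntegrableOn (F ρ φ σ γ B h₀ ℓ) (Set.Ioi 0) volume := by
  have hhi0 : 0 ≤ hi := le_trans hlo.le hlohi
  set M := Mb σ γ B lo hi (h₀ + hi) with hMdef
  have hM : 0 ≤ M := Mb_nonneg hσ hγσ hB hlo hhi (by linarith)
  refine Integrable.mono' (g := fun s => M * Real.exp (-ρ * s))
    ((exp_neg_integrableOn_Ioi 0 hρ).const_mul M)
    ((F_measurable hlo hg ρ σ γ B h₀).aestronglyMeasurable) ?_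
  filter_upwards [ae_restrict_mem measurableSet_Ioi] with s hs
  have hs0 : (0:ℝ) ≤ s := le_of_lt hs
  have h1 : 0 ≤ traj φ h₀ ℓ s := traj_nonneg hφ hlo hg.adm hh₀ hs0
  have h2 : traj φ h₀ ℓ s ≤ h₀ + hi := traj_le hφ hlo hg hh₀ hs0
  have hU1 := U2_nonpos hσ hγσ hB hlo hhi (hg.2 s) h1
  have hU2 := U2_lower hσ hγσ hB hlo hlohi hhi (hg.2 s) h1 h2
  have habs : |U2 σ γ B (ℓ s) (traj φ h₀ ℓ s)| ≤ M := abs_le.2 ⟨by rw [hMdef]; linarith, by linarith⟩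
  calc ‖F ρ φ σ γ B h₀ ℓ s‖
      = Real.exp (-(ρ * s)) * |U2 σ γ B (ℓ s) (traj φ h₀ ℓ s)| := by
        rw [F, norm_mul, Real.norm_eq_abs, Real.norm_eq_abs, abs_of_pos (Real.exp_pos _)]
    _ ≤ Real.exp (-(ρ * s)) * M := mul_le_mul_of_nonneg_left habs (Real.exp_pos _).le
    _ = M * Real.exp (-ρ * s) := by rw [neg_mul]; ring

lemma F_intervalIntegrable (hρ : 0 < ρ) (hφ : 0 < φ) (hσ : 1 < σ) (hγσ : 0 < γ * (σ - 1))
    (hB : 0 < B) (hlo : 0 < lo) (hlohi : lo ≤ hi) (hhi : hi < 1) {ℓ : ℝ → ℝ}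
    (hg : GAdm lo hi ℓ) {h₀ : ℝ} (hh₀ : 0 ≤ h₀) {t : ℝ} (ht : 0 ≤ t) :
    IntervalIntegrable (F ρ φ σ γ B h₀ ℓ) volume 0 t := by
  rw [intervalIntegrable_iff, Set.uIoc_of_le ht]
  exact (F_integrableOn hρ hφ hσ hγσ hB hlo hlohi hhi hg hh₀).mono_set Set.Ioc_subset_Ioi_self

lemma payoff_nonpos (hφ : 0 < φ) (hσ : 1 < σ) (hγσ : 0 < γ * (σ - 1)) (hB : 0 < B)
    (hlo : 0 < lo) (hhi : hi < 1) {ℓ : ℝ → ℝ} (h : Admissible lo hi ℓ) {h₀ : ℝ}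
    (hh₀ : 0 ≤ h₀) : (∫ s in Set.Ioi (0:ℝ), F ρ φ σ γ B h₀ ℓ s) ≤ 0 := by
  refine integral_nonpos_of_ae ?_
  filter_upwards [ae_restrict_mem measurableSet_Ioi] with s hs
  have hs0 : (0:ℝ) ≤ s := le_of_lt hs
  have hU := U2_nonpos hσ hγσ hB hlo hhi (h.2 s hs0) (traj_nonneg hφ hlo h hh₀ hs0)
  have he := Real.exp_pos (-(ρ * s))
  show Real.exp (-(ρ * s)) * U2 σ γ B (ℓ s) (traj φ h₀ ℓ s) ≤ 0
  nlinarith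

lemma interval_payoff_nonpos (hφ : 0 < φ) (hσ : 1 < σ) (hγσ : 0 < γ * (σ - 1)) (hB : 0 < B)
    (hlo : 0 < lo) (hhi : hi < 1) {ℓ : ℝ → ℝ} (h : Admissible lo hi ℓ) {h₀ : ℝ}
    (hh₀ : 0 ≤ h₀) {t : ℝ} (ht : 0 ≤ t) :
    (∫ s in (0:ℝ)..t, F ρ φ σ γ B h₀ ℓ s) ≤ 0 := by
  rw [intervalIntegral.integral_of_le ht]
  refine integral_nonpos_of_ae ?_
  filter_upwards [ae_restrict_mem measurableSet_Ioc] with s hs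
  have hs0 : (0:ℝ) ≤ s := le_of_lt hs.1
  have hU := U2_nonpos hσ hγσ hB hlo hhi (h.2 s hs0) (traj_nonneg hφ hlo h hh₀ hs0)
  have he := Real.exp_pos (-(ρ * s))
  show Real.exp (-(ρ * s)) * U2 σ γ B (ℓ s) (traj φ h₀ ℓ s) ≤ 0
  nlinarith

lemma traj_congr {ℓ₁ ℓ₂ : ℝ → ℝ} (h : ∀ u, 0 ≤ u → ℓ₁ u = ℓ₂ u) (h₀ : ℝ) {u : ℝ}
    (hu : 0 ≤ u) : traj φ h₀ ℓ₁ u = traj φ h₀ ℓ₂ u := by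
  unfold traj
  congr 2
  refine intervalIntegral.integral_congr fun v hv => ?_
  rw [Set.uIcc_of_le hu] at hv
  rw [h v hv.1]

lemma ae_ne (t : ℝ) : ∀ᵐ v : ℝ, v ≠ t := by
  rw [ae_iff]
  have : {v : ℝ | ¬v ≠ t} = {t} := by ext v; simp
  rw [this]
  exact Real.volume_singleton

lemma traj_congr_ae {ℓ₁ ℓ₂ : ℝ → ℝ} {t : ℝ} (h : ∀ u, 0 ≤ u → u < t → ℓ₁ u = ℓ₂ u)
    (h₀ : ℝ) {u : ℝ} (hu0 : 0 ≤ u) (hut : u ≤ t) :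
    traj φ h₀ ℓ₁ u = traj φ h₀ ℓ₂ u := by
  unfold traj
  congr 2
  refine intervalIntegral.integral_congr_ae ?_
  filter_upwards [ae_ne t] with v hv hv2
  rw [Set.uIoc_of_le hu0] at hv2
  have : v < t := lt_of_le_of_ne (hv2.2.trans hut) hv
  rw [h v hv2.1.le this]

lemma payoff_congr {ℓ₁ ℓ₂ : ℝ → ℝ} (h : ∀ u, 0 ≤ u → ℓ₁ u = ℓ₂ u) (ρ σ γ B h₀ : ℝ) :
    (∫ s in Set.Ioi (0:ℝ), F ρ φ σ γ B h₀ ℓ₁ s)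
      = ∫ s in Set.Ioi (0:ℝ), F ρ φ σ γ B h₀ ℓ₂ s := by
  refine setIntegral_congr_fun measurableSet_Ioi fun s hs => ?_
  unfold F
  rw [h s (le_of_lt hs), traj_congr h h₀ (le_of_lt hs)]

lemma intervalF_congr {ℓ₁ ℓ₂ : ℝ → ℝ} {t : ℝ} (ht : 0 ≤ t)
    (h : ∀ u, 0 ≤ u → u < t → ℓ₁ u = ℓ₂ u) (ρ σ γ B h₀ : ℝ) :
    (∫ s in (0:ℝ)..t, F ρ φ σ γ B h₀ ℓ₁ s) = ∫ s in (0:ℝ)..t, F ρ φ σ γ B h₀ ℓ₂ s := by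
  refine intervalIntegral.integral_congr_ae ?_
  filter_upwards [ae_ne t] with s hs hsmem
  rw [Set.uIoc_of_le ht] at hsmem
  have hst : s < t := lt_of_le_of_ne hsmem.2 hs
  unfold F
  rw [h s hsmem.1.le hst, traj_congr_ae h h₀ hsmem.1.le hsmem.2]

lemma shift_gadm {ℓ : ℝ → ℝ} (hg : GAdm lo hi ℓ) (t : ℝ) :
    GAdm lo hi (fun v => ℓ (v + t)) :=
  ⟨hg.1.comp (measurable_add_const t), fun v => hg.2 _⟩

/-- The fundamental splitting of the payoff integral. -/
lemma payoff_split (hρ : 0 < ρ) (hφ : 0 < φ) (hσ : 1 < σ) (hγσ : 0 < γ * (σ - 1))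
    (hB : 0 < B) (hlo : 0 < lo) (hlohi : lo ≤ hi) (hhi : hi < 1) {ℓ : ℝ → ℝ}
    (hg : GAdm lo hi ℓ) {h₀ : ℝ} (hh₀ : 0 ≤ h₀) {t : ℝ} (ht : 0 < t) :
    (∫ s in Set.Ioi (0:ℝ), F ρ φ σ γ B h₀ ℓ s)
      = (∫ s in (0:ℝ)..t, F ρ φ σ γ B h₀ ℓ s)
        + Real.exp (-(ρ * t)) *
          ∫ s in Set.Ioi (0:ℝ), F ρ φ σ γ B (traj φ h₀ ℓ t) (fun v => ℓ (v + t)) s := by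
  have hFi := F_integrableOn hρ hφ hσ hγσ hB hlo hlohi hhi hg hh₀ (ρ := ρ)
  have hsplit : (∫ s in Set.Ioi (0:ℝ), F ρ φ σ γ B h₀ ℓ s)
      = (∫ s in Set.Ioc (0:ℝ) t, F ρ φ σ γ B h₀ ℓ s)
        + ∫ s in Set.Ioi t, F ρ φ σ γ B h₀ ℓ s := by
    rw [← setIntegral_union (Set.Ioc_disjoint_Ioi le_rfl) measurableSet_Ioi
      (hFi.mono_set Set.Ioc_subset_Ioi_self) (hFi.mono_set (Set.Ioi_subset_Ioi ht.le)),
      Set.Ioc_union_Ioi_eq_Ioi ht.le]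
  have h2 : (∫ s in Set.Ioc (0:ℝ) t, F ρ φ σ γ B h₀ ℓ s)
      = ∫ s in (0:ℝ)..t, F ρ φ σ γ B h₀ ℓ s :=
    (intervalIntegral.integral_of_le ht.le).symm
  have h3 : (∫ s in Set.Ioi t, F ρ φ σ γ B h₀ ℓ s)
      = ∫ s in Set.Ioi (0:ℝ), F ρ φ σ γ B h₀ ℓ (s + t) := by
    have h := (measurePreserving_add_right (volume : Measure ℝ) t).setIntegral_image_emb
      (MeasurableEquiv.addRight t).measurableEmbedding (F ρ φ σ γ B h₀ ℓ) (Set.Ioi 0)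
    simpa [Set.image_add_const_Ioi] using h
  have h4 : Set.EqOn (fun s => F ρ φ σ γ B h₀ ℓ (s + t))
      (fun s => Real.exp (-(ρ * t)) * F ρ φ σ γ B (traj φ h₀ ℓ t) (fun v => ℓ (v + t)) s)
      (Set.Ioi (0:ℝ)) := by
    intro s hs
    show F ρ φ σ γ B h₀ ℓ (s + t) = _
    unfold F
    rw [traj_semigroup hφ hlo hg h₀ ht.le (le_of_lt hs),
      show -(ρ * (s + t)) = -(ρ * t) + -(ρ * s) by ring, Real.exp_add]
    ring
  rw [hsplit, h2, h3, setIntegral_congr_fun measurableSet_Ioi h4, MeasureTheory.integral_const_mul]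
/-- The set of achievable payoffs. -/
def S0 (ρ φ σ γ B lo hi h : ℝ) : Set ℝ :=
  {x | ∃ ℓ : ℝ → ℝ, Admissible lo hi ℓ ∧ x = ∫ s in Set.Ioi (0:ℝ), F ρ φ σ γ B h ℓ s}

lemma V_eq (ρ φ σ γ B lo hi h : ℝ) : V ρ φ σ γ B lo hi h = sSup (S0 ρ φ σ γ B lo hi h) := rfl

lemma S0_nonempty (hlohi : lo ≤ hi) (ρ φ σ γ B h : ℝ) : (S0 ρ φ σ γ B lo hi h).Nonempty :=
  ⟨_, fun _ => lo, ⟨measurable_const, fun u _ => ⟨le_rfl, hlohi⟩⟩, rfl⟩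

lemma S0_ub (hφ : 0 < φ) (hσ : 1 < σ) (hγσ : 0 < γ * (σ - 1)) (hB : 0 < B)
    (hlo : 0 < lo) (hhi : hi < 1) {h : ℝ} (hh : 0 ≤ h) (ρ : ℝ) :
    ∀ x ∈ S0 ρ φ σ γ B lo hi h, x ≤ 0 := by
  rintro x ⟨ℓ, hℓ, rfl⟩
  exact payoff_nonpos hφ hσ hγσ hB hlo hhi hℓ hh

lemma S0_bdd (hφ : 0 < φ) (hσ : 1 < σ) (hγσ : 0 < γ * (σ - 1)) (hB : 0 < B)
    (hlo : 0 < lo) (hhi : hi < 1) {h : ℝ} (hh : 0 ≤ h) (ρ : ℝ) :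
    BddAbove (S0 ρ φ σ γ B lo hi h) :=
  ⟨0, fun x hx => S0_ub hφ hσ hγσ hB hlo hhi hh ρ x hx⟩

lemma V_nonpos (hφ : 0 < φ) (hσ : 1 < σ) (hγσ : 0 < γ * (σ - 1)) (hB : 0 < B)
    (hlo : 0 < lo) (hhi : hi < 1) {h : ℝ} (hh : 0 ≤ h) (ρ : ℝ) :
    V ρ φ σ γ B lo hi h ≤ 0 := by
  rw [V_eq]
  exact Real.sSup_nonpos (S0_ub hφ hσ hγσ hB hlo hhi hh ρ)

end DPPaux

open DPPaux in
/-- the Dynamic Programming Principle for `V`: for every `h₀ ≥ 0` and `t > 0`,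
`V(h₀) = sup_ℓ { ∫₀ᵗ e^{−ρs} U(ℓ(s), h^{h₀,ℓ}(s)) ds + e^{−ρt} V(h^{h₀,ℓ}(t)) }`. -/
theorem V_dynamic_programming (ρ φ σ γ B lo hi : ℝ)
    (hρ : 0 < ρ) (hφ : 0 < φ) (hσ : 1 < σ) (hγ0 : 0 < γ) (hγ1 : γ < 1)
    (hγσ : 1 < γ * (σ - 1)) (hB : 0 < B) (hlo : 0 < lo) (hlohi : lo ≤ hi) (hhi : hi < 1)
    (h₀ : ℝ) (hh₀ : 0 ≤ h₀) (t : ℝ) (ht : 0 < t) :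
    V ρ φ σ γ B lo hi h₀ =
      sSup {x | ∃ ℓ : ℝ → ℝ, Admissible lo hi ℓ ∧
        x = (∫ s in (0:ℝ)..t, Real.exp (-(ρ * s)) * U2 σ γ B (ℓ s) (traj φ h₀ ℓ s)) +
          Real.exp (-(ρ * t)) * V ρ φ σ γ B lo hi (traj φ h₀ ℓ t)} := by
  classical
  have hγσ0 : 0 < γ * (σ - 1) := by linarith
  have hS1eq : {x | ∃ ℓ : ℝ → ℝ, Admissible lo hi ℓ ∧
        x = (∫ s in (0:ℝ)..t, Real.exp (-(ρ * s)) * U2 σ γ B (ℓ s) (traj φ h₀ ℓ s)) +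
          Real.exp (-(ρ * t)) * V ρ φ σ γ B lo hi (traj φ h₀ ℓ t)}
      = {x | ∃ ℓ : ℝ → ℝ, Admissible lo hi ℓ ∧
        x = (∫ s in (0:ℝ)..t, F ρ φ σ γ B h₀ ℓ s) +
          Real.exp (-(ρ * t)) * V ρ φ σ γ B lo hi (traj φ h₀ ℓ t)} := rfl
  rw [hS1eq, V_eq]
  set S1 : Set ℝ := {x | ∃ ℓ : ℝ → ℝ, Admissible lo hi ℓ ∧
        x = (∫ s in (0:ℝ)..t, F ρ φ σ γ B h₀ ℓ s) +
          Real.exp (-(ρ * t)) * V ρ φ σ γ B lo hi (traj φ h₀ ℓ t)} with hS1def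
  have hne1 : S1.Nonempty :=
    ⟨_, fun _ => lo, ⟨measurable_const, fun u _ => ⟨le_rfl, hlohi⟩⟩, rfl⟩
  have hbdd1 : BddAbove S1 := by
    refine ⟨0, ?_⟩
    rintro x ⟨ℓ, hℓ, rfl⟩
    have hI := interval_payoff_nonpos hφ hσ hγσ0 hB hlo hhi hℓ hh₀ ht.le (ρ := ρ)
    have hVn := V_nonpos hφ hσ hγσ0 hB hlo hhi (traj_nonneg hφ hlo hℓ hh₀ ht.le) ρ
    have he := Real.exp_pos (-(ρ * t))
    have : Real.exp (-(ρ * t)) * V ρ φ σ γ B lo hi (traj φ h₀ ℓ t) ≤ 0 := by nlinarith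
    simpa using add_nonpos hI this
  apply le_antisymm
  · -- V h₀ ≤ sSup S1
    refine csSup_le (S0_nonempty hlohi ρ φ σ γ B h₀) ?_
    rintro x ⟨ℓ, hℓ, rfl⟩
    have hg : GAdm lo hi (reg lo ℓ) := reg_gadm hlohi hℓ
    have hx1 : (∫ s in Set.Ioi (0:ℝ), F ρ φ σ γ B h₀ ℓ s)
        = ∫ s in Set.Ioi (0:ℝ), F ρ φ σ γ B h₀ (reg lo ℓ) s :=
      payoff_congr (fun u hu => (reg_eqOn u hu).symm) ρ σ γ B h₀
    have hsplit := payoff_split hρ hφ hσ hγσ0 hB hlo hlohi hhi hg hh₀ ht (ρ := ρ)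
    have htraj_eq : traj φ h₀ (reg lo ℓ) t = traj φ h₀ ℓ t :=
      traj_congr (fun u hu => reg_eqOn u hu) h₀ ht.le
    have hTnn : 0 ≤ traj φ h₀ ℓ t := traj_nonneg hφ hlo hℓ hh₀ ht.le
    have hle : (∫ s in Set.Ioi (0:ℝ),
          F ρ φ σ γ B (traj φ h₀ (reg lo ℓ) t) (fun v => reg lo ℓ (v + t)) s)
        ≤ V ρ φ σ γ B lo hi (traj φ h₀ ℓ t) := by
      rw [V_eq, htraj_eq] at *
      exact le_csSup (S0_bdd hφ hσ hγσ0 hB hlo hhi hTnn ρ)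
        ⟨_, (shift_gadm hg t).adm, rfl⟩
    have hIcongr : (∫ s in (0:ℝ)..t, F ρ φ σ γ B h₀ (reg lo ℓ) s)
        = ∫ s in (0:ℝ)..t, F ρ φ σ γ B h₀ ℓ s :=
      intervalF_congr ht.le (fun u hu _ => reg_eqOn u hu) ρ σ γ B h₀
    have hmem1 : (∫ s in (0:ℝ)..t, F ρ φ σ γ B h₀ ℓ s)
        + Real.exp (-(ρ * t)) * V ρ φ σ γ B lo hi (traj φ h₀ ℓ t) ∈ S1 := ⟨ℓ, hℓ, rfl⟩
    have he := (Real.exp_pos (-(ρ * t))).le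
    have hfinal : (∫ s in Set.Ioi (0:ℝ), F ρ φ σ γ B h₀ ℓ s)
        ≤ (∫ s in (0:ℝ)..t, F ρ φ σ γ B h₀ ℓ s)
          + Real.exp (-(ρ * t)) * V ρ φ σ γ B lo hi (traj φ h₀ ℓ t) := by
      rw [hx1, hsplit, hIcongr]
      have := mul_le_mul_of_nonneg_left hle he
      linarith
    exact hfinal.trans (le_csSup hbdd1 hmem1)
  · -- sSup S1 ≤ V h₀
    refine csSup_le hne1 ?_
    rintro x ⟨ℓ, hℓ, rfl⟩
    refine le_of_forall_pos_le_add fun ε hε => ?_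
    have hTnn : 0 ≤ traj φ h₀ ℓ t := traj_nonneg hφ hlo hℓ hh₀ ht.le
    have hεe : 0 < ε * Real.exp (ρ * t) := by positivity
    have hlt : V ρ φ σ γ B lo hi (traj φ h₀ ℓ t) - ε * Real.exp (ρ * t)
        < sSup (S0 ρ φ σ γ B lo hi (traj φ h₀ ℓ t)) := by
      rw [← V_eq]; linarith
    obtain ⟨p, hpmem, hplt⟩ := exists_lt_of_lt_csSup (S0_nonempty hlohi ρ φ σ γ B _) hlt
    obtain ⟨ℓ₂, hℓ₂, hp⟩ := hpmem
    have hg1 : GAdm lo hi (reg lo ℓ) := reg_gadm hlohi hℓ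
    have hg2 : GAdm lo hi (reg lo ℓ₂) := reg_gadm hlohi hℓ₂
    set L : ℝ → ℝ := fun s => if s < t then reg lo ℓ s else reg lo ℓ₂ (s - t) with hLdef
    have hgL : GAdm lo hi L := by
      constructor
      · exact Measurable.ite (measurableSet_lt measurable_id measurable_const) hg1.1
          (hg2.1.comp (measurable_sub_const t))
      · intro u
        by_cases h : u < t
        · simpa [hLdef, h] using hg1.2 u
        · simpa [hLdef, h] using hg2.2 (u - t)
    have hPL_le : (∫ s in Set.Ioi (0:ℝ), F ρ φ σ γ B h₀ L s)
        ≤ sSup (S0 ρ φ σ γ B lo hi h₀) :=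
      le_csSup (S0_bdd hφ hσ hγσ0 hB hlo hhi hh₀ ρ) ⟨L, hgL.adm, rfl⟩
    have hsplitL := payoff_split hρ hφ hσ hγσ0 hB hlo hlohi hhi hgL hh₀ ht (ρ := ρ)
    have hLl1 : ∀ u, 0 ≤ u → u < t → L u = ℓ u := by
      intro u hu hut
      simp only [hLdef, if_pos hut]
      exact reg_eqOn u hu
    have htrajL : traj φ h₀ L t = traj φ h₀ ℓ t := traj_congr_ae hLl1 h₀ ht.le le_rfl
    have hIL : (∫ s in (0:ℝ)..t, F ρ φ σ γ B h₀ L s)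
        = ∫ s in (0:ℝ)..t, F ρ φ σ γ B h₀ ℓ s :=
      intervalF_congr ht.le hLl1 ρ σ γ B h₀
    have hshift : ∀ u, 0 ≤ u → L (u + t) = ℓ₂ u := by
      intro u hu
      have h1 : ¬(u + t < t) := by linarith
      simp only [hLdef, if_neg h1]
      rw [show u + t - t = u by ring]
      exact reg_eqOn u hu
    have htail : (∫ s in Set.Ioi (0:ℝ), F ρ φ σ γ B (traj φ h₀ L t) (fun v => L (v + t)) s)
        = ∫ s in Set.Ioi (0:ℝ), F ρ φ σ γ B (traj φ h₀ ℓ t) ℓ₂ s := by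
      rw [htrajL]
      exact payoff_congr hshift ρ σ γ B (traj φ h₀ ℓ t)
    have e1 : (∫ s in Set.Ioi (0:ℝ), F ρ φ σ γ B h₀ L s)
        = (∫ s in (0:ℝ)..t, F ρ φ σ γ B h₀ ℓ s) + Real.exp (-(ρ * t)) * p := by
      rw [hsplitL, hIL, htail, ← hp]
    have hexp1 : Real.exp (-(ρ * t)) * Real.exp (ρ * t) = 1 := by
      rw [← Real.exp_add]; simp
    have hexp0 : (0:ℝ) < Real.exp (-(ρ * t)) := Real.exp_pos _
    have h5 : Real.exp (-(ρ * t)) * V ρ φ σ γ B lo hi (traj φ h₀ ℓ t)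
        ≤ Real.exp (-(ρ * t)) * p + ε := by
      have h6 := mul_le_mul_of_nonneg_left (le_of_lt hplt) hexp0.le
      nlinarith
    linarith [hPL_le, e1, h5]
end
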